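/- arXiv:1708.01090 — 7 statements merged into one kernel-verified Lean document; each statement's English description precedes it below -/
import Mathlib

section
/- Let n ≥ 1 and let G be a nonempty closed subset of [0,1]^{n+1}. If the projection of G to its last coordinate is contained in the projection of G to its first coordinate, i.e. π_n(G) ⊆ π_0(G), then the infinite Mahavier product ⋆_{i=1}^∞ G is nonempty. -/
open Set Filter Topology unitInterval
open scoped Classical

noncomputable section

/-- The shift map on sequences in the unit interval. -/
def shiftMap (x : ℕ → unitInterval) : ℕ → unitInterval := fun n => x (n + 1)

/-- The `m`-fold Mahavier product `⋆_{i=1}^m G` of a set `G ⊆ [0,1]²`. -/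
def MahavierFin (G : Set (unitInterval × unitInterval)) (m : ℕ) :
    Set (Fin (m + 1) → unitInterval) :=
  {x | ∀ i : Fin m, (x i.castSucc, x i.succ) ∈ G}

/-- The infinite Mahavier product `⋆_{i=1}^∞ G` of a set `G ⊆ [0,1]²`. -/
def MahavierInf (G : Set (unitInterval × unitInterval)) : Set (ℕ → unitInterval) :=
  {x | ∀ i : ℕ, (x i, x (i + 1)) ∈ G}

/-- The `m`-fold Mahavier product of `H ⊆ [0,1]^{N+1}`, a subset of `[0,1]^{mN+1}`. -/
def MahavierFinN (N : ℕ) (H : Set (Fin (N + 1) → unitInterval)) (m : ℕ) :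
    Set (Fin (m * N + 1) → unitInterval) :=
  {x | ∀ j : Fin m, (fun i : Fin (N + 1) =>
      x ⟨j.1 * N + i.1, by
        have hi : i.1 ≤ N := Nat.lt_succ_iff.mp i.2
        have hj : j.1 + 1 ≤ m := j.2
        have h : (j.1 + 1) * N ≤ m * N := Nat.mul_le_mul_right N hj
        have h2 : (j.1 + 1) * N = j.1 * N + N := by ring
        omega⟩) ∈ H}

/-- The infinite Mahavier product of `H ⊆ [0,1]^{N+1}`. -/
def MahavierInfN (N : ℕ) (H : Set (Fin (N + 1) → unitInterval)) :
    Set (ℕ → unitInterval) :=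
  {x | ∀ j : ℕ, (fun i : Fin (N + 1) => x (j * N + i.1)) ∈ H}

/-- The least cardinality of a subcollection of `U` covering `K`. -/
def coverNum {X : Type*} (K : Set X) (U : Set (Set X)) : ℕ :=
  sInf {n | ∃ F : Finset (Set X), ↑F ⊆ U ∧ F.card = n ∧ K ⊆ ⋃₀ ↑F}

/-- `α` is a minimal finite cover of `[0,1]` by open intervals: every member is open in
`[0,1]` and order-connected (an interval), `α` covers `[0,1]`, and no proper
subcollection of `α` covers `[0,1]`. -/
def IsMinimalIntervalCover (α : Finset (Set unitInterval)) : Prop :=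
  (∀ u ∈ α, IsOpen u ∧ u.OrdConnected) ∧
  (⋃₀ (α : Set (Set unitInterval)) = Set.univ) ∧
  ∀ β : Finset (Set unitInterval), β ⊆ α →
    ⋃₀ (β : Set (Set unitInterval)) = Set.univ → β = α

/-- The grid cover `α^k` of `[0,1]^k`: all products of `k` members of `α`. -/
def gridCover (α : Finset (Set unitInterval)) (k : ℕ) :
    Set (Set (Fin k → unitInterval)) :=
  {s | ∃ f : Fin k → Set unitInterval, (∀ i, f i ∈ α) ∧ s = {x | ∀ i, x i ∈ f i}}

/-- Entropy of `G ⊆ [0,1]²` relative to the cover `α`: the limit (realized as a `limsup`)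
of `(1/m) log N(⋆_{i=1}^m G, α^{m+1})` if `⋆_{i=1}^∞ G ≠ ∅`, and `0` otherwise. -/
def entOf (G : Set (unitInterval × unitInterval))
    (α : Finset (Set unitInterval)) : ENNReal :=
  if (MahavierInf G).Nonempty then
    Filter.limsup (fun m : ℕ =>
      ENNReal.ofReal
        (Real.log (coverNum (MahavierFin G m) (gridCover α (m + 1))) / m))
      Filter.atTop
  else 0

/-- Topological entropy of `G ⊆ [0,1]²`: the supremum of `entOf G α` over all minimal
open interval covers `α` of `[0,1]`. -/
def ent (G : Set (unitInterval × unitInterval)) : ENNReal :=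
  ⨆ α : {α : Finset (Set unitInterval) // IsMinimalIntervalCover α}, entOf G α.1

/-- Entropy of `H ⊆ [0,1]^{N+1}` relative to the cover `α`. -/
def entOfN (N : ℕ) (H : Set (Fin (N + 1) → unitInterval))
    (α : Finset (Set unitInterval)) : ENNReal :=
  if (MahavierInfN N H).Nonempty then
    Filter.limsup (fun m : ℕ =>
      ENNReal.ofReal
        (Real.log (coverNum (MahavierFinN N H m) (gridCover α (m * N + 1))) / m))
      Filter.atTop
  else 0

/-- Topological entropy of `H ⊆ [0,1]^{N+1}`. -/
def entN (N : ℕ) (H : Set (Fin (N + 1) → unitInterval)) : ENNReal :=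
  ⨆ α : {α : Finset (Set unitInterval) // IsMinimalIntervalCover α}, entOfN N H α.1

/-- An open cover of a topological space. -/
def IsOpenCover {X : Type*} [TopologicalSpace X] (U : Set (Set X)) : Prop :=
  (∀ u ∈ U, IsOpen u) ∧ ⋃₀ U = Set.univ

/-- The join `U ∨ T⁻¹U ∨ ⋯ ∨ T⁻ⁿU` of the open cover `U` under the map `T`. -/
def dynJoin {X : Type*} (T : X → X) (U : Set (Set X)) (n : ℕ) : Set (Set X) :=
  {s | ∃ f : Fin (n + 1) → Set X, (∀ i, f i ∈ U) ∧ s = ⋂ i, T^[i.1] ⁻¹' f i}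

/-- The Adler–Konheim–McAndrew topological entropy of `T : X → X`: the supremum over all
open covers `U` of `X` of `lim (1/n) log N(X, U ∨ T⁻¹U ∨ ⋯ ∨ T⁻ⁿU)` (as a `limsup`). -/
def akmEntropy {X : Type*} [TopologicalSpace X] (T : X → X) : ENNReal :=
  ⨆ U : {U : Set (Set X) // IsOpenCover U},
    Filter.limsup (fun n : ℕ =>
      ENNReal.ofReal (Real.log (coverNum Set.univ (dynJoin T U.1 n)) / n))
      Filter.atTop

/-- If `G` is a nonempty closed subset of `[0,1]^{n+1}` (`n ≥ 1`) and the
projection of `G` to the last coordinate is contained in the projection of `G` to the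
first coordinate, then the infinite Mahavier product of `G` is nonempty. -/
theorem mahavierInfN_nonempty_of_proj_subset
    (n : ℕ) (hn : 1 ≤ n) (G : Set (Fin (n + 1) → unitInterval))
    (hGne : G.Nonempty) (hGcl : IsClosed G)
    (hproj : (fun x => x (Fin.last n)) '' G ⊆ (fun x => x 0) '' G) :
    (MahavierInfN n G).Nonempty := by
  have hn0 : 0 < n := hn
  have step : ∀ y : Fin (n + 1) → unitInterval, y ∈ G →
      ∃ z, z ∈ G ∧ z 0 = y (Fin.last n) := by
    intro y hy
    obtain ⟨z, hz, hz0⟩ := hproj ⟨y, hy, rfl⟩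
    exact ⟨z, hz, hz0⟩
  choose F hF1 hF2 using step
  -- build the sequence of blocks
  let g : ℕ → {y : Fin (n + 1) → unitInterval // y ∈ G} := fun j =>
    Nat.rec ⟨hGne.choose, hGne.choose_spec⟩ (fun _ p => ⟨F p.1 p.2, hF1 p.1 p.2⟩) j
  have hglue : ∀ j : ℕ, (g (j + 1)).1 0 = (g j).1 (Fin.last n) := fun j =>
    hF2 (g j).1 (g j).2
  refine ⟨fun k => (g (k / n)).1 ⟨k % n, Nat.lt_succ_of_lt (Nat.mod_lt _ hn0)⟩, ?_⟩
  intro j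
  show (fun i : Fin (n + 1) => _) ∈ G
  have : (fun i : Fin (n + 1) =>
      (g ((j * n + i.1) / n)).1
        ⟨(j * n + i.1) % n, Nat.lt_succ_of_lt (Nat.mod_lt _ hn0)⟩) = (g j).1 := by
    funext i
    rcases Nat.lt_or_ge i.1 n with hi | hi
    · have hdiv : (j * n + i.1) / n = j := by
        rw [Nat.add_comm, Nat.add_mul_div_right _ _ hn0, Nat.div_eq_of_lt hi, Nat.zero_add]
      have hmod : (j * n + i.1) % n = i.1 := by
        rw [Nat.add_comm, Nat.add_mul_mod_self_right, Nat.mod_eq_of_lt hi]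
      have hfin : (⟨(j * n + i.1) % n, Nat.lt_succ_of_lt (Nat.mod_lt _ hn0)⟩ : Fin (n + 1))
          = i := Fin.ext hmod
      rw [hdiv, hfin]
    · have hin : i.1 = n := le_antisymm (Nat.lt_succ_iff.mp i.2) hi
      have heq : j * n + i.1 = (j + 1) * n := by rw [hin]; ring
      have hdiv : (j * n + i.1) / n = j + 1 := by
        rw [heq, Nat.mul_div_cancel _ hn0]
      have hmod : (j * n + i.1) % n = 0 := by
        rw [heq, Nat.mul_mod_left]
      have hi' : i = Fin.last n := Fin.ext hin
      have : (⟨(j * n + i.1) % n, Nat.lt_succ_of_lt (Nat.mod_lt _ hn0)⟩ : Fin (n + 1))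
          = (0 : Fin (n + 1)) := Fin.ext hmod
      rw [hdiv, this, hi']
      exact hglue j
  rw [this]
  exact (g j).2
end
end

section
/- Let G be a closed subset of [0,1]² with ⋆_{i=1}^∞ G ≠ ∅, and let α be a minimal open interval cover of [0,1]. Then for all integers m, k ≥ 1, N(⋆_{i=1}^{m+k} G, α^{m+k+1}) ≤ N(⋆_{i=1}^m G, α^{m+1}) · N(⋆_{i=1}^k G, α^{k+1}); consequently the limit lim_{m→∞} (1/m)·log N(⋆_{i=1}^m G, α^{m+1}) exists and equals inf_{m ≥ 1} (1/m)·log N(⋆_{i=1}^m G, α^{m+1}). -/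
open Set Filter Topology unitInterval
open scoped Classical

noncomputable section

lemma gridCover_finite (α : Finset (Set unitInterval)) (k : ℕ) :
    (gridCover α k).Finite := by
  have hsub : gridCover α k ⊆
      Set.range (fun f : Fin k → {s // s ∈ α} =>
        {x : Fin k → unitInterval | ∀ i, x i ∈ (f i : Set unitInterval)}) := by
    rintro s ⟨f, hf, rfl⟩
    exact ⟨fun i => ⟨f i, hf i⟩, rfl⟩
  exact (Set.finite_range _).subset hsub

lemma gridCover_covers (α : Finset (Set unitInterval))
    (hα : ⋃₀ (α : Set (Set unitInterval)) = Set.univ) (k : ℕ)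
    (K : Set (Fin k → unitInterval)) : K ⊆ ⋃₀ (gridCover α k) := by
  intro x _
  have h : ∀ i : Fin k, ∃ u ∈ (α : Set (Set unitInterval)), x i ∈ u := by
    intro i
    have : x i ∈ ⋃₀ (α : Set (Set unitInterval)) := by rw [hα]; trivial
    exact this
  choose f hf hxf using h
  exact ⟨{y | ∀ i, y i ∈ f i}, ⟨f, hf, rfl⟩, hxf⟩

lemma coverNum_spec (α : Finset (Set unitInterval))
    (hα : ⋃₀ (α : Set (Set unitInterval)) = Set.univ) (k : ℕ)
    (K : Set (Fin k → unitInterval)) :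
    ∃ F : Finset (Set (Fin k → unitInterval)), ↑F ⊆ gridCover α k ∧
      F.card = coverNum K (gridCover α k) ∧ K ⊆ ⋃₀ ↑F := by
  have hne : {n | ∃ F : Finset (Set (Fin k → unitInterval)),
      ↑F ⊆ gridCover α k ∧ F.card = n ∧ K ⊆ ⋃₀ ↑F}.Nonempty := by
    refine ⟨(gridCover_finite α k).toFinset.card, (gridCover_finite α k).toFinset, ?_, rfl, ?_⟩
    · rw [Set.Finite.coe_toFinset]
    · rw [Set.Finite.coe_toFinset]; exact gridCover_covers α hα k K
  obtain ⟨F, h1, h2, h3⟩ := Nat.sInf_mem hne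
  exact ⟨F, h1, h2, h3⟩

lemma coverNum_pos (α : Finset (Set unitInterval))
    (hα : ⋃₀ (α : Set (Set unitInterval)) = Set.univ) (k : ℕ)
    (K : Set (Fin k → unitInterval)) (hK : K.Nonempty) :
    1 ≤ coverNum K (gridCover α k) := by
  obtain ⟨F, _, hcard, hcov⟩ := coverNum_spec α hα k K
  rw [← hcard]
  rcases Nat.eq_zero_or_pos F.card with h | h
  · exfalso
    rw [Finset.card_eq_zero] at h
    subst h
    obtain ⟨x, hx⟩ := hK
    simpa using hcov hx
  · exact h

lemma coverNum_le' {X : Type*} (K : Set X) (U : Set (Set X)) (F : Finset (Set X))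
    (h1 : ↑F ⊆ U) (h2 : K ⊆ ⋃₀ ↑F) : coverNum K U ≤ F.card :=
  Nat.sInf_le ⟨F, h1, rfl, h2⟩

lemma coverNum_submult (G : Set (unitInterval × unitInterval)) (m k : ℕ)
    (α : Finset (Set unitInterval))
    (hα : ⋃₀ (α : Set (Set unitInterval)) = Set.univ) :
    coverNum (MahavierFin G (m + k)) (gridCover α (m + k + 1)) ≤
      coverNum (MahavierFin G m) (gridCover α (m + 1)) *
        coverNum (MahavierFin G k) (gridCover α (k + 1)) := by
  obtain ⟨F₁, hF₁sub, hF₁card, hF₁cov⟩ := coverNum_spec α hα (m + 1) (MahavierFin G m)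
  obtain ⟨F₂, hF₂sub, hF₂card, hF₂cov⟩ := coverNum_spec α hα (k + 1) (MahavierFin G k)
  have h1 : ∀ s : {s // s ∈ F₁}, ∃ f : Fin (m + 1) → Set unitInterval,
      (∀ i, f i ∈ α) ∧ (s : Set (Fin (m + 1) → unitInterval)) = {x | ∀ i, x i ∈ f i} :=
    fun s => hF₁sub s.2
  have h2 : ∀ t : {t // t ∈ F₂}, ∃ g : Fin (k + 1) → Set unitInterval,
      (∀ i, g i ∈ α) ∧ (t : Set (Fin (k + 1) → unitInterval)) = {x | ∀ i, x i ∈ g i} :=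
    fun t => hF₂sub t.2
  choose φ hφα hφeq using h1
  choose ψ hψα hψeq using h2
  set glue : {s // s ∈ F₁} × {t // t ∈ F₂} → Set (Fin (m + k + 1) → unitInterval) :=
    fun p => {x | ∀ i : Fin (m + k + 1),
      x i ∈ (if h : i.1 < m + 1 then φ p.1 ⟨i.1, h⟩ else ψ p.2 ⟨i.1 - m, by omega⟩)}
    with hglue
  set F : Finset (Set (Fin (m + k + 1) → unitInterval)) :=
    Finset.image glue Finset.univ with hF
  have hFsub : ↑F ⊆ gridCover α (m + k + 1) := by
    intro s hs
    simp only [hF, Finset.coe_image, Set.mem_image] at hs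
    obtain ⟨p, _, rfl⟩ := hs
    refine ⟨fun i => if h : i.1 < m + 1 then φ p.1 ⟨i.1, h⟩ else ψ p.2 ⟨i.1 - m, by omega⟩,
      fun i => ?_, rfl⟩
    by_cases h : i.1 < m + 1
    · simp [h]; exact hφα p.1 _
    · simp [h]; exact hψα p.2 _
  have hFcov : MahavierFin G (m + k) ⊆ ⋃₀ ↑F := by
    intro x hx
    have hy : (fun i : Fin (m + 1) => x ⟨i.1, by omega⟩) ∈ MahavierFin G m := by
      intro i
      exact hx ⟨i.1, by omega⟩
    have hz : (fun j : Fin (k + 1) => x ⟨m + j.1, by omega⟩) ∈ MahavierFin G k := by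
      intro j
      exact hx ⟨m + j.1, by omega⟩
    obtain ⟨s, hsF, hys⟩ := hF₁cov hy
    obtain ⟨t, htF, hzt⟩ := hF₂cov hz
    refine ⟨glue (⟨s, hsF⟩, ⟨t, htF⟩), by simp [hF], ?_⟩
    have hy' : ∀ i : Fin (m + 1), x ⟨i.1, by omega⟩ ∈ φ ⟨s, hsF⟩ i := by
      have hh := hys
      rw [show s = {x : Fin (m + 1) → unitInterval | ∀ i, x i ∈ φ ⟨s, hsF⟩ i} from
        hφeq ⟨s, hsF⟩] at hh
      exact hh
    have hz' : ∀ j : Fin (k + 1), x ⟨m + j.1, by omega⟩ ∈ ψ ⟨t, htF⟩ j := by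
      have hh := hzt
      rw [show t = {x : Fin (k + 1) → unitInterval | ∀ i, x i ∈ ψ ⟨t, htF⟩ i} from
        hψeq ⟨t, htF⟩] at hh
      exact hh
    intro i
    by_cases h : i.1 < m + 1
    · simp only [dif_pos h]
      exact hy' ⟨i.1, h⟩
    · simp only [dif_neg h]
      have h3 := hz' ⟨i.1 - m, by omega⟩
      have e : (⟨m + (i.1 - m), by omega⟩ : Fin (m + k + 1)) = i := Fin.ext (by simp; omega)
      rw [e] at h3
      exact h3
  calc coverNum (MahavierFin G (m + k)) (gridCover α (m + k + 1)) ≤ F.card :=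
        coverNum_le' _ _ F hFsub hFcov
    _ ≤ Fintype.card ({s // s ∈ F₁} × {t // t ∈ F₂}) := by
        rw [← Finset.card_univ]; exact Finset.card_image_le
    _ = F₁.card * F₂.card := by simp [Fintype.card_prod]
    _ = _ := by rw [hF₁card, hF₂card]

/-- For closed `G ⊆ [0,1]²` with `⋆_{i=1}^∞ G ≠ ∅` and a minimal open
interval cover `α` of `[0,1]`, the cover numbers are submultiplicative, and
`(1/m) log N(⋆_{i=1}^m G, α^{m+1})` converges to its infimum over `m ≥ 1`. -/
theorem coverNum_submultiplicative_and_tendsto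
    (G : Set (unitInterval × unitInterval)) (hGcl : IsClosed G)
    (hne : (MahavierInf G).Nonempty)
    (α : Finset (Set unitInterval)) (hα : IsMinimalIntervalCover α) :
    (∀ m k : ℕ, 1 ≤ m → 1 ≤ k →
      coverNum (MahavierFin G (m + k)) (gridCover α (m + k + 1)) ≤
        coverNum (MahavierFin G m) (gridCover α (m + 1)) *
          coverNum (MahavierFin G k) (gridCover α (k + 1))) ∧
    Filter.Tendsto
      (fun m : ℕ =>
        Real.log (coverNum (MahavierFin G m) (gridCover α (m + 1))) / m)
      Filter.atTop
      (nhds (⨅ m : {m : ℕ // 1 ≤ m},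
        Real.log (coverNum (MahavierFin G m.1) (gridCover α (m.1 + 1))) / m.1)) := by
  have hαcov : ⋃₀ (α : Set (Set unitInterval)) = Set.univ := hα.2.1
  have hMne : ∀ n : ℕ, (MahavierFin G n).Nonempty := by
    obtain ⟨x, hx⟩ := hne
    intro n
    exact ⟨fun i => x i.1, fun i => hx i.1⟩
  have hpos : ∀ n : ℕ, 1 ≤ coverNum (MahavierFin G n) (gridCover α (n + 1)) :=
    fun n => coverNum_pos α hαcov (n + 1) _ (hMne n)
  constructor
  · intro m k _ _
    exact coverNum_submult G m k α hαcov
  · set u : ℕ → ℝ := fun n =>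
      Real.log (coverNum (MahavierFin G n) (gridCover α (n + 1))) with hu
    have hsub : Subadditive u := by
      intro p q
      have hle := coverNum_submult G p q α hαcov
      have hp := hpos p
      have hq := hpos q
      have hp' : (0 : ℝ) < (coverNum (MahavierFin G p) (gridCover α (p + 1)) : ℝ) := by
        exact_mod_cast hp
      have hq' : (0 : ℝ) < (coverNum (MahavierFin G q) (gridCover α (q + 1)) : ℝ) := by
        exact_mod_cast hq
      have hpq' : (0 : ℝ) < (coverNum (MahavierFin G (p + q)) (gridCover α (p + q + 1)) : ℝ) := by
        exact_mod_cast hpos (p + q)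
      calc u (p + q)
          ≤ Real.log ((coverNum (MahavierFin G p) (gridCover α (p + 1)) : ℝ) *
              (coverNum (MahavierFin G q) (gridCover α (q + 1)) : ℝ)) := by
            apply Real.log_le_log hpq'
            exact_mod_cast hle
        _ = u p + u q := Real.log_mul hp'.ne' hq'.ne'
    have hbdd : BddBelow (Set.range fun n : ℕ => u n / n) := by
      refine ⟨0, ?_⟩
      rintro r ⟨n, rfl⟩
      apply div_nonneg _ (Nat.cast_nonneg n)
      apply Real.log_nonneg
      exact_mod_cast hpos n
    have key := hsub.tendsto_lim hbdd
    have hlim : hsub.lim = ⨅ m : {m : ℕ // 1 ≤ m}, u m.1 / m.1 := by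
      rw [Subadditive.lim, iInf]
      congr 1
      ext r
      constructor
      · rintro ⟨n, hn, rfl⟩
        exact ⟨⟨n, hn⟩, rfl⟩
      · rintro ⟨⟨n, hn⟩, rfl⟩
        exact ⟨n, hn, rfl⟩
    rw [← hlim]
    exact key
end
end

section
/- Let N ≥ 1, let H be a closed subset of [0,1]^{N+1}, and let H^{-1} = {(x_N, x_{N-1}, …, x_1, x_0) : (x_0, x_1, …, x_{N-1}, x_N) ∈ H}. Then ent(H) = ent(H^{-1}). -/
open Set Filter Topology unitInterval
open scoped Classical

noncomputable section

/-! ### Auxiliary material for `entN_inv` -/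

/-- Coordinate reversal on finite tuples. -/
def revF (k : ℕ) (x : Fin k → unitInterval) : Fin k → unitInterval := fun i => x (Fin.rev i)

lemma revF_revF (k : ℕ) (x : Fin k → unitInterval) : revF k (revF k x) = x := by
  funext i; simp [revF, Fin.rev_rev]

lemma revF_involutive (k : ℕ) : Function.Involutive (revF k) := revF_revF k

/-- Coordinate reversal as an equivalence. -/
def revE (k : ℕ) : Equiv (Fin k → unitInterval) (Fin k → unitInterval) :=
  ⟨revF k, revF k, revF_revF k, revF_revF k⟩

lemma revF_mem_image_iff (k : ℕ) (H : Set (Fin k → unitInterval))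
    (x : Fin k → unitInterval) : revF k x ∈ revF k '' H ↔ x ∈ H := by
  constructor
  · rintro ⟨z, hz, he⟩
    have hzx : z = x := by
      have h2 := congrArg (revF k) he
      rwa [revF_revF, revF_revF] at h2
    rwa [← hzx]
  · exact fun h => ⟨x, h, rfl⟩

lemma revF_image_image (k : ℕ) (H : Set (Fin k → unitInterval)) :
    revF k '' (revF k '' H) = H := by
  rw [← Set.image_comp]
  have : revF k ∘ revF k = id := funext (revF_revF k)
  rw [this, Set.image_id]

lemma continuous_revF (k : ℕ) : Continuous (revF k) :=
  continuous_pi fun i => continuous_apply _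

lemma revF_image_isClosed (k : ℕ) (H : Set (Fin k → unitInterval)) (h : IsClosed H) :
    IsClosed (revF k '' H) :=
  (h.isCompact.image (continuous_revF k)).isClosed

lemma idxlt (N m : ℕ) (j : Fin m) (i : Fin (N + 1)) : j.1 * N + i.1 < m * N + 1 := by
  have h1 : (j.1 + 1) * N ≤ m * N := Nat.mul_le_mul_right N j.2
  have h2 : i.1 ≤ N := Nat.lt_succ_iff.mp i.2
  have h3 : j.1 * N + i.1 ≤ j.1 * N + N := Nat.add_le_add_left h2 _
  have h4 : j.1 * N + N = (j.1 + 1) * N := by ring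
  omega

lemma natarith (A B i N : ℕ) (h1 : B + N ≤ A) (h2 : i ≤ N) :
    A + 1 - (B + i + 1) = (A - (B + N)) + (N + 1 - (i + 1)) := by omega

lemma mem_MFN_rev_iff (N m : ℕ) (H : Set (Fin (N + 1) → unitInterval))
    (x : Fin (m * N + 1) → unitInterval) :
    revF (m * N + 1) x ∈ MahavierFinN N (revF (N + 1) '' H) m ↔
      x ∈ MahavierFinN N H m := by
  simp only [MahavierFinN, Set.mem_setOf_eq]
  have key : ∀ j : Fin m,
      ((fun i : Fin (N + 1) => revF (m * N + 1) x ⟨j.1 * N + i.1, idxlt N m j i⟩)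
          ∈ revF (N + 1) '' H ↔
        (fun i : Fin (N + 1) =>
          x ⟨(Fin.rev j).1 * N + i.1, idxlt N m (Fin.rev j) i⟩) ∈ H) := by
    intro j
    have heq : (fun i : Fin (N + 1) => revF (m * N + 1) x ⟨j.1 * N + i.1, idxlt N m j i⟩)
        = revF (N + 1) (fun i : Fin (N + 1) =>
            x ⟨(Fin.rev j).1 * N + i.1, idxlt N m (Fin.rev j) i⟩) := by
      funext i
      simp only [revF]
      apply congrArg x
      apply Fin.ext
      simp only [Fin.val_rev]
      have hj : j.1 + 1 ≤ m := j.2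
      have hi : i.1 ≤ N := Nat.lt_succ_iff.mp i.2
      have h1 : (m - (j.1 + 1)) * N = m * N - (j.1 * N + N) := by
        rw [Nat.sub_mul, Nat.add_mul, Nat.one_mul]
      have h2 : j.1 * N + N ≤ m * N := by
        have h3 := Nat.mul_le_mul_right N hj
        have h4 : (j.1 + 1) * N = j.1 * N + N := by ring
        omega
      rw [h1]
      exact natarith (m * N) (j.1 * N) i.1 N h2 hi
    rw [heq, revF_mem_image_iff]
  constructor
  · intro h j
    have h2 := (key (Fin.rev j)).mp (h (Fin.rev j))
    simpa only [Fin.rev_rev] using h2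
  · intro h j
    exact (key j).mpr (h (Fin.rev j))

lemma coverNumSet_preimage_le {X : Type*} (e : X ≃ X) (K : Set X) (U : Set (Set X))
    (hU : ∀ s ∈ U, e ⁻¹' s ∈ U) :
    {n | ∃ F : Finset (Set X), ↑F ⊆ U ∧ F.card = n ∧ K ⊆ ⋃₀ ↑F} ⊆
      {n | ∃ F : Finset (Set X), ↑F ⊆ U ∧ F.card = n ∧ e ⁻¹' K ⊆ ⋃₀ ↑F} := by
  rintro n ⟨F, hFU, hcard, hcov⟩
  refine ⟨F.image (fun s => e ⁻¹' s), ?_, ?_, ?_⟩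
  · intro s hs
    simp only [Finset.coe_image, Set.mem_image, Finset.mem_coe] at hs
    obtain ⟨t, ht, rfl⟩ := hs
    exact hU t (hFU ht)
  · rw [Finset.card_image_of_injective F (Set.preimage_injective.mpr e.surjective), hcard]
  · intro x hx
    obtain ⟨s, hsF, hxs⟩ := hcov hx
    refine ⟨e ⁻¹' s, ?_, hxs⟩
    simp only [Finset.coe_image, Set.mem_image, Finset.mem_coe]
    exact ⟨s, hsF, rfl⟩

lemma coverNum_preimage_eq {X : Type*} (e : X ≃ X) (K : Set X) (U : Set (Set X))
    (hU : ∀ s ∈ U, e ⁻¹' s ∈ U) (hU' : ∀ s ∈ U, e.symm ⁻¹' s ∈ U) :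
    coverNum (e ⁻¹' K) U = coverNum K U := by
  unfold coverNum
  congr 1
  apply Set.Subset.antisymm
  · have h := coverNumSet_preimage_le e.symm (e ⁻¹' K) U hU'
    have hpre : e.symm ⁻¹' (e ⁻¹' K) = K := by
      ext x; simp [Set.mem_preimage]
    rwa [hpre] at h
  · exact coverNumSet_preimage_le e K U hU

lemma revF_preimage_gridCover (α : Finset (Set unitInterval)) (k : ℕ)
    (s : Set (Fin k → unitInterval)) (hs : s ∈ gridCover α k) :
    (revF k) ⁻¹' s ∈ gridCover α k := by
  obtain ⟨f, hf, rfl⟩ := hs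
  refine ⟨fun i => f (Fin.rev i), fun i => hf _, ?_⟩
  ext x
  simp only [Set.mem_preimage, Set.mem_setOf_eq, revF]
  constructor
  · intro h i
    have h2 := h (Fin.rev i)
    rwa [Fin.rev_rev] at h2
  · intro h i
    have h2 := h (Fin.rev i)
    rwa [Fin.rev_rev] at h2

lemma coverNum_MFN_rev (N m : ℕ) (α : Finset (Set unitInterval))
    (H : Set (Fin (N + 1) → unitInterval)) :
    coverNum (MahavierFinN N H m) (gridCover α (m * N + 1))
      = coverNum (MahavierFinN N (revF (N + 1) '' H) m) (gridCover α (m * N + 1)) := by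
  have hpre : (revE (m * N + 1)) ⁻¹' (MahavierFinN N (revF (N + 1) '' H) m)
      = MahavierFinN N H m := by
    ext x
    exact mem_MFN_rev_iff N m H x
  rw [← hpre]
  exact coverNum_preimage_eq (revE (m * N + 1)) _ _
    (fun s hs => revF_preimage_gridCover α _ s hs)
    (fun s hs => revF_preimage_gridCover α _ s hs)

lemma infN_nonempty_rev (N : ℕ) (H : Set (Fin (N + 1) → unitInterval))
    (hH : IsClosed H) (h : (MahavierInfN N H).Nonempty) :
    (MahavierInfN N (revF (N + 1) '' H)).Nonempty := by
  obtain ⟨x, hx⟩ := h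
  set G := revF (N + 1) '' H with hG
  have hfin : ∀ m, (MahavierFinN N G m).Nonempty := by
    intro m
    refine ⟨revF (m * N + 1) (fun i => x i.1), ?_⟩
    rw [mem_MFN_rev_iff]
    intro j
    exact hx j.1
  have hGcl : IsClosed G := revF_image_isClosed _ _ hH
  let C : ℕ → Set (ℕ → unitInterval) :=
    fun j => {y | (fun i : Fin (N + 1) => y (j * N + i.1)) ∈ G}
  have hCcl : ∀ j, IsClosed (C j) := by
    intro j
    have : C j = (fun y : ℕ → unitInterval =>
        (fun i : Fin (N + 1) => y (j * N + i.1))) ⁻¹' G := rfl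
    rw [this]
    exact hGcl.preimage (continuous_pi fun i : Fin (N + 1) => continuous_apply (j * N + i.1))
  let V : ℕ → Set (ℕ → unitInterval) := fun m => ⋂ j ∈ Finset.range m, C j
  have hVcl : ∀ m, IsClosed (V m) := fun m =>
    isClosed_biInter fun j _ => hCcl j
  have hVmono : ∀ m, V (m + 1) ⊆ V m := by
    intro m y hy
    simp only [V, Set.mem_iInter, Finset.mem_range] at hy ⊢
    intro j hj
    exact hy j (Nat.lt_succ_of_lt hj)
  have hVne : ∀ m, (V m).Nonempty := by
    intro m
    obtain ⟨w, hw⟩ := hfin m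
    refine ⟨fun n => if hn : n < m * N + 1 then w ⟨n, hn⟩ else 0, ?_⟩
    simp only [V, Set.mem_iInter, Finset.mem_range]
    intro j hj
    have heq : (fun i : Fin (N + 1) =>
          if hn : j * N + i.1 < m * N + 1 then w ⟨j * N + i.1, hn⟩ else 0)
        = (fun i : Fin (N + 1) => w ⟨j * N + i.1, idxlt N m ⟨j, hj⟩ i⟩) := by
      funext i
      exact dif_pos (idxlt N m ⟨j, hj⟩ i)
    show (fun i : Fin (N + 1) =>
        if hn : j * N + i.1 < m * N + 1 then w ⟨j * N + i.1, hn⟩ else 0) ∈ G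
    rw [heq]
    exact hw ⟨j, hj⟩
  have hint : (⋂ m, V m).Nonempty :=
    IsCompact.nonempty_iInter_of_sequence_nonempty_isCompact_isClosed V hVmono hVne
      ((hVcl 0).isCompact) hVcl
  obtain ⟨y, hy⟩ := hint
  refine ⟨y, ?_⟩
  intro j
  have h2 : y ∈ V (j + 1) := Set.mem_iInter.mp hy (j + 1)
  simp only [V, Set.mem_iInter, Finset.mem_range] at h2
  exact h2 j (Nat.lt_succ_self j)

lemma entOfN_rev (N : ℕ) (H : Set (Fin (N + 1) → unitInterval)) (hHcl : IsClosed H)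
    (α : Finset (Set unitInterval)) :
    entOfN N H α = entOfN N (revF (N + 1) '' H) α := by
  have hiff : (MahavierInfN N H).Nonempty ↔
      (MahavierInfN N (revF (N + 1) '' H)).Nonempty := by
    constructor
    · exact infN_nonempty_rev N H hHcl
    · intro h
      have h2 := infN_nonempty_rev N (revF (N + 1) '' H)
        (revF_image_isClosed _ _ hHcl) h
      rwa [revF_image_image] at h2
  unfold entOfN
  have hcn : ∀ m : ℕ, coverNum (MahavierFinN N H m) (gridCover α (m * N + 1))
      = coverNum (MahavierFinN N (revF (N + 1) '' H) m) (gridCover α (m * N + 1)) :=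
    fun m => coverNum_MFN_rev N m α H
  simp only [hcn]
  by_cases h : (MahavierInfN N H).Nonempty
  · rw [if_pos h, if_pos (hiff.mp h)]
  · rw [if_neg h, if_neg (fun h2 => h (hiff.mpr h2))]

/-- For `N ≥ 1` and a closed `H ⊆ [0,1]^{N+1}`, `ent(H) = ent(H⁻¹)`, where
`H⁻¹` is obtained by reversing the order of the coordinates. -/
theorem entN_inv (N : ℕ) (hN : 1 ≤ N) (H : Set (Fin (N + 1) → unitInterval))
    (hHcl : IsClosed H) :
    entN N H = entN N ((fun x => fun i => x (Fin.rev i)) '' H) := by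
  have himg : (fun x => fun i => x (Fin.rev i)) '' H = revF (N + 1) '' H := rfl
  rw [himg]
  unfold entN
  exact iSup_congr fun α => entOfN_rev N H hHcl α.1
end
end

section
/- Suppose G is a closed subset of [0,1]², 𝐆 = ⋆_{i=1}^∞ G is nonempty, and σ(𝐆) = 𝐆. Then ent(G) = h(σ|_𝐆), the Adler–Konheim–McAndrew topological entropy of the shift map σ restricted to the compact space 𝐆. -/
open Set Filter Topology unitInterval
open scoped Classical

noncomputable section

namespace EntPf

/-- The set of achievable subcover cardinalities. -/
def CovSet {X : Type*} (K : Set X) (U : Set (Set X)) : Set ℕ :=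
  {n | ∃ F : Finset (Set X), ↑F ⊆ U ∧ F.card = n ∧ K ⊆ ⋃₀ ↑F}

lemma coverNum_le_card {X : Type*} {K : Set X} {U : Set (Set X)} {F : Finset (Set X)}
    (hF : ↑F ⊆ U) (hc : K ⊆ ⋃₀ ↑F) : coverNum K U ≤ F.card :=
  Nat.sInf_le ⟨F, hF, rfl, hc⟩

lemma exists_min_cover {X : Type*} {K : Set X} {U : Set (Set X)}
    (h : (CovSet K U).Nonempty) :
    ∃ F : Finset (Set X), ↑F ⊆ U ∧ F.card = coverNum K U ∧ K ⊆ ⋃₀ ↑F :=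
  Nat.sInf_mem h

lemma coverNum_le_of_assignment {X Y : Type*} {K : Set X} {U : Set (Set X)}
    {K' : Set Y} {U' : Set (Set Y)} (h0 : (CovSet K U).Nonempty)
    (h : ∀ F : Finset (Set X), ↑F ⊆ U → K ⊆ ⋃₀ ↑F →
      ∃ F' : Finset (Set Y), ↑F' ⊆ U' ∧ F'.card ≤ F.card ∧ K' ⊆ ⋃₀ ↑F') :
    coverNum K' U' ≤ coverNum K U := by
  obtain ⟨F, hF, hcard, hcov⟩ := exists_min_cover h0
  obtain ⟨F', hF', hle, hcov'⟩ := h F hF hcov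
  exact (coverNum_le_card hF' hcov').trans (hle.trans hcard.le)

/-- Assignment lemma with a pointwise map on cover elements. -/
lemma coverNum_le_of_map {X Y : Type*} {K : Set X} {U : Set (Set X)}
    {K' : Set Y} {U' : Set (Set Y)} (h0 : (CovSet K U).Nonempty)
    (Φ : Set X → Set Y) (hΦ : ∀ u ∈ U, Φ u ∈ U')
    (hcov : ∀ F : Finset (Set X), ↑F ⊆ U → K ⊆ ⋃₀ ↑F → K' ⊆ ⋃₀ ↑(F.image Φ)) :
    coverNum K' U' ≤ coverNum K U := by
  refine coverNum_le_of_assignment h0 (fun F hF hc => ⟨F.image Φ, ?_, Finset.card_image_le, hcov F hF hc⟩)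
  intro s hs
  simp only [Finset.coe_image, Set.mem_image] at hs
  obtain ⟨u, hu, rfl⟩ := hs
  exact hΦ u (hF hu)

lemma coverNum_mono_set {X : Type*} {K K' : Set X} {U : Set (Set X)}
    (hKK : K ⊆ K') (h0 : (CovSet K' U).Nonempty) : coverNum K U ≤ coverNum K' U := by
  refine coverNum_le_of_assignment h0 (fun F hF hc => ⟨F, hF, le_rfl, hKK.trans hc⟩)

lemma coverNum_anti_cover {X : Type*} {K : Set X} {U V : Set (Set X)}
    (h0 : (CovSet K V).Nonempty) (h : ∀ v ∈ V, ∃ u ∈ U, v ⊆ u) :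
    coverNum K U ≤ coverNum K V := by
  refine coverNum_le_of_assignment h0 (fun F hF hc => ?_)
  classical
  refine ⟨F.attach.image (fun s => (h s.1 (hF s.2)).choose), ?_, ?_, ?_⟩
  · intro u hu
    simp only [Finset.coe_image, Set.mem_image] at hu
    obtain ⟨s, _, rfl⟩ := hu
    exact (h s.1 (hF s.2)).choose_spec.1
  · exact Finset.card_image_le.trans (by simp)
  · intro x hx
    obtain ⟨v, hvF, hxv⟩ := hc hx
    refine ⟨(h v (hF hvF)).choose, ?_, (h v (hF hvF)).choose_spec.2 hxv⟩
    simp only [Finset.coe_image, Set.mem_image]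
    exact ⟨⟨v, hvF⟩, Finset.mem_attach _ _, rfl⟩

lemma coverNum_le_of_cover_subset {X : Type*} {K : Set X} {U W : Set (Set X)}
    (hWU : W ⊆ U) (h0 : (CovSet K W).Nonempty) : coverNum K U ≤ coverNum K W :=
  coverNum_anti_cover h0 (fun v hv => ⟨v, hWU hv, subset_rfl⟩)

lemma one_le_coverNum {X : Type*} {K : Set X} {U : Set (Set X)}
    (hK : K.Nonempty) (h0 : (CovSet K U).Nonempty) : 1 ≤ coverNum K U := by
  obtain ⟨F, _, hcard, hcov⟩ := exists_min_cover h0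
  rw [← hcard]
  rw [Nat.one_le_iff_ne_zero, ← Nat.pos_iff_ne_zero, Finset.card_pos]
  obtain ⟨x, hx⟩ := hK
  obtain ⟨s, hs, _⟩ := hcov hx
  exact ⟨s, hs⟩

/-- The full grid: all boxes built from `α`. -/
lemma grid_covSet_aux (α : Finset (Set unitInterval)) (hα : ⋃₀ (α : Set (Set unitInterval)) = univ)
    (k : ℕ) (K : Set (Fin k → unitInterval)) :
    ∃ F : Finset (Set (Fin k → unitInterval)),
      ↑F ⊆ gridCover α k ∧ F.card ≤ α.card ^ k ∧ K ⊆ ⋃₀ ↑F := by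
  classical
  refine ⟨Finset.univ.image (fun f : Fin k → {s // s ∈ α} => {x : Fin k → unitInterval | ∀ i, x i ∈ (f i).1}), ?_, ?_, ?_⟩
  · intro s hs
    simp only [Finset.coe_image, Set.mem_image] at hs
    obtain ⟨f, _, rfl⟩ := hs
    exact ⟨fun i => (f i).1, fun i => (f i).2, rfl⟩
  · refine Finset.card_image_le.trans ?_
    simp only [Finset.card_univ]
    rw [Fintype.card_fun]
    simp
  · intro x _
    have hx : ∀ i : Fin k, ∃ s : {s // s ∈ α}, x i ∈ s.1 := by
      intro i
      have : (x i : unitInterval) ∈ ⋃₀ (α : Set (Set unitInterval)) := by rw [hα]; trivial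
      obtain ⟨s, hs, hxs⟩ := this
      exact ⟨⟨s, hs⟩, hxs⟩
    choose f hf using hx
    refine ⟨{y : Fin k → unitInterval | ∀ i, y i ∈ (f i).1}, ?_, hf⟩
    simp only [Finset.coe_image, Set.mem_image]
    exact ⟨f, Finset.mem_univ _, rfl⟩

lemma grid_covSet_nonempty (α : Finset (Set unitInterval))
    (hα : ⋃₀ (α : Set (Set unitInterval)) = univ) (k : ℕ) (K : Set (Fin k → unitInterval)) :
    (CovSet K (gridCover α k)).Nonempty := by
  obtain ⟨F, h1, _, h3⟩ := grid_covSet_aux α hα k K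
  exact ⟨F.card, F, h1, rfl, h3⟩

lemma coverNum_le_pow (α : Finset (Set unitInterval))
    (hα : ⋃₀ (α : Set (Set unitInterval)) = univ) (k : ℕ) (K : Set (Fin k → unitInterval)) :
    coverNum K (gridCover α k) ≤ α.card ^ k := by
  obtain ⟨F, h1, h2, h3⟩ := grid_covSet_aux α hα k K
  exact (coverNum_le_card h1 h3).trans h2

lemma isOpen_grid_mem {α : Finset (Set unitInterval)} (hαo : ∀ u ∈ α, IsOpen u) {k : ℕ}
    {s : Set (Fin k → unitInterval)} (hs : s ∈ gridCover α k) : IsOpen s := by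
  obtain ⟨f, hf, rfl⟩ := hs
  have : {x : Fin k → unitInterval | ∀ i, x i ∈ f i} = ⋂ i, (fun x : Fin k → unitInterval => x i) ⁻¹' f i := by
    ext x; simp
  rw [this]
  exact isOpen_iInter_of_finite (fun i => (hαo _ (hf i)).preimage (continuous_apply i))

lemma isClosed_mahavierFin (G : Set (unitInterval × unitInterval)) (hG : IsClosed G) (n : ℕ) :
    IsClosed (MahavierFin G n) := by
  have : MahavierFin G n = ⋂ i : Fin n,
      (fun x : Fin (n+1) → unitInterval => (x i.castSucc, x i.succ)) ⁻¹' G := by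
    ext x; simp [MahavierFin]
  rw [this]
  exact isClosed_iInter (fun i => hG.preimage ((continuous_apply i.castSucc).prodMk (continuous_apply i.succ)))

lemma isCompact_mahavierFin (G : Set (unitInterval × unitInterval)) (hG : IsClosed G) (n : ℕ) :
    IsCompact (MahavierFin G n) := (isClosed_mahavierFin G hG n).isCompact

lemma isClosed_mahavierInf (G : Set (unitInterval × unitInterval)) (hG : IsClosed G) :
    IsClosed (MahavierInf G) := by
  have : MahavierInf G = ⋂ i : ℕ,
      (fun x : ℕ → unitInterval => (x i, x (i+1))) ⁻¹' G := by
    ext x; simp [MahavierInf]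
  rw [this]
  exact isClosed_iInter (fun i => hG.preimage ((continuous_apply i).prodMk (continuous_apply (i+1))))


variable {G : Set (unitInterval × unitInterval)}

/-- Projection onto the first `n+1` coordinates. -/
def projn (n : ℕ) (x : ℕ → unitInterval) : Fin (n+1) → unitInterval := fun i => x i.1

lemma continuous_projn (n : ℕ) : Continuous (projn n) :=
  continuous_pi (fun i => continuous_apply i.1)

/-- The projection of the infinite Mahavier product to the first `n+1` coordinates. -/
def PmSet (G : Set (unitInterval × unitInterval)) (n : ℕ) : Set (Fin (n+1) → unitInterval) :=
  projn n '' MahavierInf G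

def trunc (m k : ℕ) (x : Fin (m+k+1) → unitInterval) : Fin (m+1) → unitInterval :=
  fun i => x ⟨i.1, by omega⟩

lemma continuous_trunc (m k : ℕ) : Continuous (trunc m k) :=
  continuous_pi (fun i => continuous_apply _)

/-- Paths of length `m` extendable `k` more steps. -/
def ESet (G : Set (unitInterval × unitInterval)) (m k : ℕ) : Set (Fin (m+1) → unitInterval) :=
  trunc m k '' MahavierFin G (m+k)

lemma projn_mem_mahavierFin {x : ℕ → unitInterval} (hx : x ∈ MahavierInf G) (n : ℕ) :
    projn n x ∈ MahavierFin G n := by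
  intro i
  exact hx i.1

lemma pmSet_nonempty (hne : (MahavierInf G).Nonempty) (n : ℕ) : (PmSet G n).Nonempty := by
  obtain ⟨z, hz⟩ := hne
  exact ⟨projn n z, z, hz, rfl⟩

lemma mahavierFin_nonempty (hne : (MahavierInf G).Nonempty) (n : ℕ) :
    (MahavierFin G n).Nonempty := by
  obtain ⟨z, hz⟩ := hne
  exact ⟨projn n z, projn_mem_mahavierFin hz n⟩

lemma pmSet_subset_mahavierFin (n : ℕ) : PmSet G n ⊆ MahavierFin G n := by
  rintro x ⟨z, hz, rfl⟩
  exact projn_mem_mahavierFin hz n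

lemma pmSet_subset_eSet (m k : ℕ) : PmSet G m ⊆ ESet G m k := by
  rintro x ⟨z, hz, rfl⟩
  refine ⟨projn (m+k) z, projn_mem_mahavierFin hz (m+k), ?_⟩
  funext i
  rfl

lemma eSet_subset_mahavierFin (m k : ℕ) : ESet G m k ⊆ MahavierFin G m := by
  rintro x ⟨y, hy, rfl⟩
  intro i
  exact hy ⟨i.1, by omega⟩

lemma eSet_nonempty (hne : (MahavierInf G).Nonempty) (m k : ℕ) : (ESet G m k).Nonempty :=
  (pmSet_nonempty hne m).mono (pmSet_subset_eSet m k)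

lemma eSet_antitone (m : ℕ) {k k' : ℕ} (hkk : k ≤ k') : ESet G m k' ⊆ ESet G m k := by
  rintro x ⟨y, hy, rfl⟩
  refine ⟨fun i => y ⟨i.1, by omega⟩, ?_, ?_⟩
  · intro i
    exact hy ⟨i.1, by omega⟩
  · funext i
    rfl

lemma isCompact_eSet (hG : IsClosed G) (m k : ℕ) : IsCompact (ESet G m k) :=
  ((isCompact_mahavierFin G hG (m+k))).image (continuous_trunc m k)

lemma pmSet_eq_iInter_eSet (hG : IsClosed G) (m : ℕ) :
    PmSet G m = ⋂ k : ℕ, ESet G m k := by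
  apply Set.Subset.antisymm
  · exact Set.subset_iInter (fun k => pmSet_subset_eSet m k)
  · intro x hx
    simp only [Set.mem_iInter] at hx
    -- the closed sets of infinite sequences extending x for at least m+k steps
    set C : ℕ → Set (ℕ → unitInterval) := fun k =>
      {z | (∀ i : Fin (m+1), z i.1 = x i) ∧ ∀ i, i < m + k → (z i, z (i+1)) ∈ G} with hC
    have hclosed : ∀ k, IsClosed (C k) := by
      intro k
      have hCk : C k = (⋂ i : Fin (m+1), {z : ℕ → unitInterval | z i.1 = x i}) ∩
          (⋂ i : ℕ, ⋂ (_ : i < m + k), (fun z : ℕ → unitInterval => (z i, z (i+1))) ⁻¹' G) := by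
        ext z
        simp [hC, Set.mem_iInter]
      rw [hCk]
      refine IsClosed.inter (isClosed_iInter (fun i =>
          isClosed_eq (continuous_apply i.1) continuous_const))
        (isClosed_iInter (fun i => isClosed_iInter (fun _ =>
          hG.preimage ((continuous_apply i).prodMk (continuous_apply (i+1))))))
    have hne : ∀ k, (C k).Nonempty := by
      intro k
      obtain ⟨y, hy, hyx⟩ := hx k
      refine ⟨fun i => if h : i < m + k + 1 then y ⟨i, h⟩ else y ⟨m+k, by omega⟩, ?_, ?_⟩
      · intro i
        have h1 : i.1 < m + k + 1 := by omega
        simp only [dif_pos h1]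
        rw [← hyx]
        rfl
      · intro i hi
        have h1 : i < m + k + 1 := by omega
        have h2 : i + 1 < m + k + 1 := by omega
        simp only [dif_pos h1, dif_pos h2]
        exact hy ⟨i, hi⟩
    have hanti : Antitone C := by
      intro k k' hkk z hz
      exact ⟨hz.1, fun i hi => hz.2 i (by omega)⟩
    have hcpt : ∀ k, IsCompact (C k) := fun k => (hclosed k).isCompact
    have : (⋂ k, C k).Nonempty :=
      IsCompact.nonempty_iInter_of_directed_nonempty_isCompact_isClosed C
        hanti.directed_ge hne hcpt hclosed
    obtain ⟨z, hz⟩ := this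
    simp only [Set.mem_iInter] at hz
    refine ⟨z, ?_, ?_⟩
    · intro i
      exact (hz (i+1)).2 i (by omega)
    · funext i
      exact (hz 0).1 i

/-- Stabilization: for large `k`, covering `ESet G m k` is no harder than covering
the projection of the infinite product. -/
lemma exists_eSet_coverNum_le (hG : IsClosed G) (α : Finset (Set unitInterval))
    (hαo : ∀ u ∈ α, IsOpen u) (hαc : ⋃₀ (α : Set (Set unitInterval)) = univ) (m : ℕ) :
    ∃ k₀, ∀ k, k₀ ≤ k →
      coverNum (ESet G m k) (gridCover α (m+1)) ≤ coverNum (PmSet G m) (gridCover α (m+1)) := by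
  obtain ⟨F, hF, hcard, hcov⟩ := exists_min_cover (grid_covSet_nonempty α hαc (m+1) (PmSet G m))
  set O : Set (Fin (m+1) → unitInterval) := ⋃₀ ↑F with hO
  have hOopen : IsOpen O := by
    apply isOpen_sUnion
    intro s hs
    exact isOpen_grid_mem hαo (hF hs)
  -- find k₀ with ESet G m k₀ ⊆ O
  have key : ∃ k₀, ESet G m k₀ ⊆ O := by
    by_contra hcon
    push_neg at hcon
    have hne' : ∀ k, (ESet G m k ∩ Oᶜ).Nonempty := by
      intro k
      obtain ⟨x, hx, hxO⟩ := Set.not_subset.mp (hcon k)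
      exact ⟨x, hx, hxO⟩
    have hcpt : ∀ k, IsCompact (ESet G m k ∩ Oᶜ) := fun k =>
      ((isCompact_eSet hG m k).inter_right hOopen.isClosed_compl)
    have hcl : ∀ k, IsClosed (ESet G m k ∩ Oᶜ) := fun k =>
      IsClosed.inter (isCompact_eSet hG m k).isClosed hOopen.isClosed_compl
    have hanti : Antitone (fun k => ESet G m k ∩ Oᶜ) := by
      intro k k' hkk
      exact Set.inter_subset_inter_left _ (eSet_antitone m hkk)
    have : (⋂ k, ESet G m k ∩ Oᶜ).Nonempty :=
      IsCompact.nonempty_iInter_of_directed_nonempty_isCompact_isClosed _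
        hanti.directed_ge hne' hcpt hcl
    obtain ⟨x, hx⟩ := this
    simp only [Set.mem_iInter, Set.mem_inter_iff] at hx
    have hxP : x ∈ PmSet G m := by
      rw [pmSet_eq_iInter_eSet hG]
      exact Set.mem_iInter.mpr (fun k => (hx k).1)
    exact (hx 0).2 (hcov hxP)
  obtain ⟨k₀, hk₀⟩ := key
  refine ⟨k₀, fun k hk => ?_⟩
  calc coverNum (ESet G m k) (gridCover α (m+1)) ≤ F.card :=
        coverNum_le_card hF ((eSet_antitone m hk).trans hk₀)
    _ = _ := hcard


/-- Covering number of the `n`-fold Mahavier product by the grid. -/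
def NN (G : Set (unitInterval × unitInterval)) (α : Finset (Set unitInterval)) (n : ℕ) : ℕ :=
  coverNum (MahavierFin G n) (gridCover α (n+1))

/-- Covering number of the projection of the infinite Mahavier product. -/
def BB (G : Set (unitInterval × unitInterval)) (α : Finset (Set unitInterval)) (m : ℕ) : ℕ :=
  coverNum (PmSet G m) (gridCover α (m+1))

lemma coverNum_split (α : Finset (Set unitInterval))
    (hαc : ⋃₀ (α : Set (Set unitInterval)) = univ) (m t : ℕ) :
    NN G α (m+1+t) ≤ coverNum (ESet G m (t+1)) (gridCover α (m+1)) * NN G α t := by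
  classical
  obtain ⟨F₁, hF₁, hcard₁, hcov₁⟩ :=
    exists_min_cover (grid_covSet_nonempty α hαc (m+1) (ESet G m (t+1)))
  obtain ⟨F₂, hF₂, hcard₂, hcov₂⟩ :=
    exists_min_cover (grid_covSet_nonempty α hαc (t+1) (MahavierFin G t))
  set pref : (Fin (m+1+t+1) → unitInterval) → Fin (m+1) → unitInterval :=
    fun x i => x ⟨i.1, by omega⟩ with hpref
  set suff : (Fin (m+1+t+1) → unitInterval) → Fin (t+1) → unitInterval :=
    fun x i => x ⟨m+1+i.1, by omega⟩ with hsuff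
  set F : Finset (Set (Fin (m+1+t+1) → unitInterval)) :=
    (F₁ ×ˢ F₂).image (fun p => {x | pref x ∈ p.1 ∧ suff x ∈ p.2}) with hF
  have hsub : ↑F ⊆ gridCover α (m+1+t+1) := by
    intro s hs
    simp only [hF, Finset.coe_image, Set.mem_image, Finset.mem_coe, Finset.mem_product] at hs
    obtain ⟨⟨s₁, s₂⟩, ⟨h1, h2⟩, rfl⟩ := hs
    obtain ⟨f₁, hf₁, rfl⟩ := hF₁ h1
    obtain ⟨f₂, hf₂, rfl⟩ := hF₂ h2
    refine ⟨fun i => if h : i.1 < m+1 then f₁ ⟨i.1, h⟩ else f₂ ⟨i.1-(m+1), by omega⟩, ?_, ?_⟩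
    · intro i
      by_cases h : i.1 < m+1 <;> simp only [dif_pos, dif_neg, h, not_false_iff]
      · exact hf₁ _
      · exact hf₂ _
    · ext x
      simp only [Set.mem_setOf_eq]
      constructor
      · rintro ⟨ha, hb⟩ i
        by_cases h : i.1 < m+1
        · simp only [dif_pos h]
          exact ha ⟨i.1, h⟩
        · simp only [dif_neg h]
          have := hb ⟨i.1-(m+1), by omega⟩
          simpa [hsuff, show m+1+(i.1-(m+1)) = i.1 from by omega] using this
      · intro hall
        constructor
        · intro i
          have := hall ⟨i.1, by omega⟩
          simp only [dif_pos i.2] at this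
          exact this
        · intro i
          have hn : ¬ (m+1+i.1 < m+1) := by omega
          have := hall ⟨m+1+i.1, by omega⟩
          simp only [dif_neg hn] at this
          simpa [hsuff, show m+1+i.1-(m+1) = i.1 from by omega] using this
  have hcov : MahavierFin G (m+1+t) ⊆ ⋃₀ ↑F := by
    intro x hx
    have hp : pref x ∈ ESet G m (t+1) := by
      refine ⟨fun i : Fin (m+(t+1)+1) => x ⟨i.1, by omega⟩, ?_, ?_⟩
      · intro j
        exact hx ⟨j.1, by omega⟩
      · funext i
        rfl
    have hs : suff x ∈ MahavierFin G t := by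
      intro j
      exact hx ⟨m+1+j.1, by omega⟩
    obtain ⟨s₁, hs₁, hps₁⟩ := hcov₁ hp
    obtain ⟨s₂, hs₂, hps₂⟩ := hcov₂ hs
    refine ⟨{y | pref y ∈ s₁ ∧ suff y ∈ s₂}, ?_, hps₁, hps₂⟩
    simp only [hF, Finset.coe_image, Set.mem_image, Finset.mem_coe, Finset.mem_product]
    exact ⟨(s₁, s₂), ⟨hs₁, hs₂⟩, rfl⟩
  calc NN G α (m+1+t) ≤ F.card := coverNum_le_card hsub hcov
    _ ≤ (F₁ ×ˢ F₂).card := Finset.card_image_le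
    _ = F₁.card * F₂.card := Finset.card_product _ _
    _ = _ := by rw [hcard₁, hcard₂]; rfl

lemma coverNum_iter (hG : IsClosed G) (α : Finset (Set unitInterval))
    (hαc : ⋃₀ (α : Set (Set unitInterval)) = univ) (m k₀ : ℕ)
    (hk₀ : ∀ k, k₀ ≤ k → coverNum (ESet G m k) (gridCover α (m+1)) ≤ BB G α m) :
    ∀ r t, k₀ ≤ t + 1 → NN G α (r*(m+1)+t) ≤ (BB G α m)^r * NN G α t := by
  intro r
  induction r with
  | zero => intro t _; simp
  | succ r ih =>
    intro t ht
    have harg : (r+1)*(m+1)+t = m+1+(r*(m+1)+t) := by ring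
    rw [harg]
    calc NN G α (m+1+(r*(m+1)+t))
        ≤ coverNum (ESet G m ((r*(m+1)+t)+1)) (gridCover α (m+1)) * NN G α (r*(m+1)+t) :=
          coverNum_split α hαc m _
      _ ≤ BB G α m * ((BB G α m)^r * NN G α t) := by
          refine Nat.mul_le_mul (hk₀ _ (by omega)) (ih t ht)
      _ = (BB G α m)^(r+1) * NN G α t := by ring

lemma one_le_NN (hne : (MahavierInf G).Nonempty) (α : Finset (Set unitInterval))
    (hαc : ⋃₀ (α : Set (Set unitInterval)) = univ) (n : ℕ) : 1 ≤ NN G α n :=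
  one_le_coverNum (mahavierFin_nonempty hne n) (grid_covSet_nonempty α hαc _ _)

lemma one_le_BB (hne : (MahavierInf G).Nonempty) (α : Finset (Set unitInterval))
    (hαc : ⋃₀ (α : Set (Set unitInterval)) = univ) (m : ℕ) : 1 ≤ BB G α m :=
  one_le_coverNum (pmSet_nonempty hne m) (grid_covSet_nonempty α hαc _ _)

lemma NN_le_pow (α : Finset (Set unitInterval))
    (hαc : ⋃₀ (α : Set (Set unitInterval)) = univ) (n : ℕ) : NN G α n ≤ α.card ^ (n+1) :=
  coverNum_le_pow α hαc _ _

lemma one_le_card_of_cover (α : Finset (Set unitInterval))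
    (hαc : ⋃₀ (α : Set (Set unitInterval)) = univ) : 1 ≤ α.card := by
  rw [Nat.one_le_iff_ne_zero, ← Nat.pos_iff_ne_zero, Finset.card_pos]
  by_contra h
  rw [Finset.not_nonempty_iff_eq_empty] at h
  subst h
  simp only [Finset.coe_empty, Set.sUnion_empty] at hαc
  exact (Set.univ_nonempty (α := unitInterval)).ne_empty hαc.symm

/-- The core Goal-B estimate. -/
lemma limsup_NN_le (hG : IsClosed G) (hne : (MahavierInf G).Nonempty)
    (α : Finset (Set unitInterval)) (hαo : ∀ u ∈ α, IsOpen u)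
    (hαc : ⋃₀ (α : Set (Set unitInterval)) = univ) (m : ℕ) :
    Filter.limsup (fun n : ℕ => ENNReal.ofReal (Real.log (NN G α n) / n)) Filter.atTop ≤
      ENNReal.ofReal (Real.log (BB G α m) / (m+1)) := by
  obtain ⟨k₀, hk₀⟩ := exists_eSet_coverNum_le hG α hαo hαc m
  have hB1 : 1 ≤ BB G α m := one_le_BB hne α hαc m
  have hN1 : ∀ n, 1 ≤ NN G α n := one_le_NN hne α hαc
  have hα1 : 1 ≤ α.card := one_le_card_of_cover α hαc
  set C : ℝ := (k₀+m+1+1) * Real.log (α.card) with hCdef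
  have hlogB : (0:ℝ) ≤ Real.log (BB G α m) :=
    Real.log_nonneg (by exact_mod_cast hB1)
  have hlogα : (0:ℝ) ≤ Real.log (α.card) :=
    Real.log_nonneg (by exact_mod_cast hα1)
  have hC0 : 0 ≤ C := by positivity
  have key : ∀ n : ℕ, k₀ ≤ n → 1 ≤ n →
      Real.log (NN G α n) / n ≤ Real.log (BB G α m) / (m+1) + C / n := by
    intro n hk₀n h1n
    obtain ⟨r, u, hu, hsum⟩ : ∃ r u, u < m+1 ∧ r*(m+1) + u = n - k₀ := by
      refine ⟨(n-k₀)/(m+1), (n-k₀)%(m+1), Nat.mod_lt _ (by omega), ?_⟩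
      rw [Nat.mul_comm]
      exact Nat.div_add_mod _ _
    set t := n - r*(m+1) with htdef
    have ht1 : k₀ ≤ t := by omega
    have ht2 : t ≤ k₀ + m := by omega
    have hnrt : n = r*(m+1)+t := by omega
    have hiter : NN G α n ≤ (BB G α m)^r * NN G α t := by
      rw [hnrt]
      exact coverNum_iter hG α hαc m k₀ hk₀ r t (by omega)
    have hNt : NN G α t ≤ α.card ^ (t+1) := NN_le_pow α hαc t
    have hpos : (0:ℝ) < (NN G α n : ℝ) := by exact_mod_cast hN1 n
    have hlog1 : Real.log (NN G α n) ≤ r * Real.log (BB G α m) + Real.log (NN G α t) := by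
      calc Real.log (NN G α n) ≤ Real.log ((BB G α m)^r * NN G α t) := by
            apply Real.log_le_log hpos
            exact_mod_cast hiter
        _ = r * Real.log (BB G α m) + Real.log (NN G α t) := by
            push_cast
            have hNt0 : ((NN G α t : ℝ)) ≠ 0 := by
              have : (0:ℝ) < (NN G α t : ℝ) := by exact_mod_cast hN1 t
              exact this.ne'
            rw [Real.log_mul (by positivity) hNt0, Real.log_pow]
    have hlog2 : Real.log (NN G α t) ≤ C := by
      calc Real.log (NN G α t) ≤ Real.log ((α.card : ℝ) ^ (t+1)) := by
            apply Real.log_le_log (by exact_mod_cast hN1 t)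
            exact_mod_cast hNt
        _ = (t+1) * Real.log (α.card) := by rw [Real.log_pow]; push_cast; ring
        _ ≤ C := by
            rw [hCdef]
            apply mul_le_mul_of_nonneg_right _ hlogα
            push_cast
            have : (t:ℝ) ≤ k₀ + m := by exact_mod_cast ht2
            linarith
    have hn0 : (0:ℝ) < n := by exact_mod_cast h1n
    have hrn : (r:ℝ) * (m+1) ≤ n := by
      have : r*(m+1) ≤ n := by omega
      exact_mod_cast this
    calc Real.log (NN G α n) / n ≤ (r * Real.log (BB G α m) + C) / n := by
          gcongr
          linarith
      _ ≤ Real.log (BB G α m) / (m+1) + C / n := by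
          rw [add_div]
          apply add_le_add_left
          rw [div_le_div_iff₀ hn0 (by positivity)]
          calc r * Real.log (BB G α m) * (m+1) = (r * (m+1)) * Real.log (BB G α m) := by ring
            _ ≤ n * Real.log (BB G α m) := mul_le_mul_of_nonneg_right hrn hlogB
            _ = Real.log (BB G α m) * n := by ring
  set c : ENNReal := ENNReal.ofReal (Real.log (BB G α m) / (m+1)) with hc
  have hev : ∀ᶠ n : ℕ in Filter.atTop, ENNReal.ofReal (Real.log (NN G α n) / n) ≤
      c + ENNReal.ofReal (C / n) := by
    filter_upwards [Filter.eventually_ge_atTop (max k₀ 1)] with n hn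
    have h1 : Real.log (NN G α n) / n ≤ Real.log (BB G α m) / (m+1) + C / n :=
      key n (le_trans (le_max_left _ _) hn) (le_trans (le_max_right _ _) hn)
    exact le_trans (ENNReal.ofReal_le_ofReal h1) ENNReal.ofReal_add_le
  have htend : Filter.Tendsto (fun n : ℕ => c + ENNReal.ofReal (C / n))
      Filter.atTop (𝓝 c) := by
    have h0 : Filter.Tendsto (fun n : ℕ => ENNReal.ofReal (C / n)) Filter.atTop (𝓝 0) := by
      have := ENNReal.tendsto_ofReal (tendsto_const_div_atTop_nhds_zero_nat C)
      simpa using this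
    have h2 := Filter.Tendsto.const_add c h0
    simpa using h2
  calc Filter.limsup (fun n : ℕ => ENNReal.ofReal (Real.log (NN G α n) / n)) Filter.atTop
      ≤ Filter.limsup (fun n : ℕ => c + ENNReal.ofReal (C / n)) Filter.atTop :=
        Filter.limsup_le_limsup hev
    _ = c := htend.limsup_eq


section Shift

variable (T : MahavierInf G → MahavierInf G)
  (hT : ∀ z : MahavierInf G, (T z : ℕ → unitInterval) = shiftMap ↑z)

include hT

/-- The cover of `𝐆` by preimages of `α` under the 0-th coordinate. -/
def Ucov (G : Set (unitInterval × unitInterval)) (α : Finset (Set unitInterval)) :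
    Set (Set (MahavierInf G)) :=
  (fun A => {z : MahavierInf G | (z : ℕ → unitInterval) 0 ∈ A}) '' (α : Set (Set unitInterval))

/-- The cover of `𝐆` by `α`-cylinders of length `K+1`. -/
def VK (G : Set (unitInterval × unitInterval)) (α : Finset (Set unitInterval)) (K : ℕ) :
    Set (Set (MahavierInf G)) :=
  {s | ∃ g : Fin (K+1) → Set unitInterval, (∀ i, g i ∈ α) ∧
    s = {z : MahavierInf G | ∀ i : Fin (K+1), (z : ℕ → unitInterval) i.1 ∈ g i}}

lemma iterate_apply : ∀ (i : ℕ) (z : MahavierInf G) (j : ℕ),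
    ((T^[i] z : ℕ → unitInterval)) j = (z : ℕ → unitInterval) (i + j) := by
  intro i
  induction i with
  | zero => intro z j; simp
  | succ i ih =>
    intro z j
    rw [Function.iterate_succ_apply]
    rw [ih (T z) j, hT z]
    show shiftMap (↑z) (i + j) = _
    unfold shiftMap
    have he : i + j + 1 = i + 1 + j := by omega
    rw [he]

lemma cyl_mem_dynJoin (α : Finset (Set unitInterval)) {n : ℕ}
    (A : Fin (n+1) → Set unitInterval) (hA : ∀ i, A i ∈ α) :
    {z : MahavierInf G | ∀ i : Fin (n+1), (z : ℕ → unitInterval) i.1 ∈ A i} ∈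
      dynJoin T (Ucov G α) n := by
  refine ⟨fun i => {z : MahavierInf G | (z : ℕ → unitInterval) 0 ∈ A i},
    fun i => ⟨A i, by simpa using hA i, rfl⟩, ?_⟩
  ext z
  simp only [Set.mem_iInter, Set.mem_preimage, Set.mem_setOf_eq, iterate_apply T hT]
  constructor
  · intro h i
    simpa using h i
  · intro h i
    simpa using h i

lemma dynJoin_Ucov_finite_cover (α : Finset (Set unitInterval))
    (hαc : ⋃₀ (α : Set (Set unitInterval)) = univ) (n : ℕ) :
    ∃ F : Finset (Set (MahavierInf G)), ↑F ⊆ dynJoin T (Ucov G α) n ∧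
      (univ : Set (MahavierInf G)) ⊆ ⋃₀ ↑F := by
  classical
  refine ⟨Finset.univ.image (fun f : Fin (n+1) → {s // s ∈ α} =>
    {z : MahavierInf G | ∀ i : Fin (n+1), (z : ℕ → unitInterval) i.1 ∈ (f i).1}), ?_, ?_⟩
  · intro s hs
    simp only [Finset.coe_image, Set.mem_image] at hs
    obtain ⟨f, _, rfl⟩ := hs
    exact cyl_mem_dynJoin T hT α _ (fun i => (f i).2)
  · intro z _
    have hx : ∀ i : Fin (n+1), ∃ s : {s // s ∈ α}, (z : ℕ → unitInterval) i.1 ∈ s.1 := by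
      intro i
      have : ((z : ℕ → unitInterval) i.1) ∈ ⋃₀ (α : Set (Set unitInterval)) := by
        rw [hαc]; trivial
      obtain ⟨s, hs, hxs⟩ := this
      exact ⟨⟨s, hs⟩, hxs⟩
    choose f hf using hx
    refine ⟨{z : MahavierInf G | ∀ i : Fin (n+1), (z : ℕ → unitInterval) i.1 ∈ (f i).1}, ?_, hf⟩
    simp only [Finset.coe_image, Set.mem_image]
    exact ⟨f, Finset.mem_univ _, rfl⟩

lemma dynJoin_covSet_nonempty (α : Finset (Set unitInterval))
    (hαc : ⋃₀ (α : Set (Set unitInterval)) = univ) (n : ℕ) :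
    (CovSet (univ : Set (MahavierInf G)) (dynJoin T (Ucov G α) n)).Nonempty := by
  obtain ⟨F, h1, h2⟩ := dynJoin_Ucov_finite_cover T hT α hαc n
  exact ⟨F.card, F, h1, rfl, h2⟩

/-- Transfer (a): covering the projection is no harder than covering `𝐆` with joins. -/
lemma BB_le_dynJoin (α : Finset (Set unitInterval))
    (hαc : ⋃₀ (α : Set (Set unitInterval)) = univ) (n : ℕ) :
    BB G α n ≤ coverNum (univ : Set (MahavierInf G)) (dynJoin T (Ucov G α) n) := by
  classical
  refine coverNum_le_of_assignment (dynJoin_covSet_nonempty T hT α hαc n) (fun F hF hcov => ?_)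
  have hsel : ∀ s ∈ F, ∃ A : Fin (n+1) → Set unitInterval, (∀ i, A i ∈ α) ∧
      s ⊆ {z : MahavierInf G | ∀ i : Fin (n+1), (z : ℕ → unitInterval) i.1 ∈ A i} := by
    intro s hs
    obtain ⟨f, hf, rfl⟩ := hF hs
    have hf' : ∀ i, ∃ A ∈ α, {z : MahavierInf G | (z : ℕ → unitInterval) 0 ∈ A} = f i := by
      intro i
      obtain ⟨A, hA1, hA2⟩ := hf i
      exact ⟨A, by simpa using hA1, hA2⟩
    choose A hA hfA using hf'
    refine ⟨A, hA, ?_⟩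
    intro z hz i
    have h1 := Set.mem_iInter.mp hz i
    rw [Set.mem_preimage, ← hfA i] at h1
    have h2 : ((T^[i.1] z : MahavierInf G) : ℕ → unitInterval) 0 ∈ A i := h1
    rw [iterate_apply T hT] at h2
    simpa using h2
  choose! A hA1 hA2 using hsel
  refine ⟨F.attach.image (fun s =>
    {x : Fin (n+1) → unitInterval | ∀ i, x i ∈ A s.1 i}), ?_, ?_, ?_⟩
  · intro s hs
    simp only [Finset.coe_image, Set.mem_image] at hs
    obtain ⟨⟨t, ht⟩, _, rfl⟩ := hs
    exact ⟨A t, hA1 t ht, rfl⟩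
  · exact Finset.card_image_le.trans (by simp)
  · rintro x ⟨z, hz, rfl⟩
    have : (⟨z, hz⟩ : MahavierInf G) ∈ ⋃₀ ↑F := hcov (Set.mem_univ _)
    obtain ⟨s, hsF, hzs⟩ := this
    refine ⟨{x : Fin (n+1) → unitInterval | ∀ i, x i ∈ A s i}, ?_, ?_⟩
    · simp only [Finset.coe_image, Set.mem_image]
      exact ⟨⟨s, hsF⟩, Finset.mem_attach _ _, rfl⟩
    · intro i
      exact hA2 s hsF hzs i

/-- Transfer (b): covering `𝐆` with joins is no harder than covering the projection. -/
lemma dynJoin_le_BB (α : Finset (Set unitInterval))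
    (hαc : ⋃₀ (α : Set (Set unitInterval)) = univ) (n : ℕ) :
    coverNum (univ : Set (MahavierInf G)) (dynJoin T (Ucov G α) n) ≤ BB G α n := by
  classical
  refine coverNum_le_of_assignment (grid_covSet_nonempty α hαc (n+1) (PmSet G n))
    (fun F hF hcov => ?_)
  have hsel : ∀ s ∈ F, ∃ f : Fin (n+1) → Set unitInterval, (∀ i, f i ∈ α) ∧
      s = {x : Fin (n+1) → unitInterval | ∀ i, x i ∈ f i} := fun s hs => hF hs
  choose! f hf1 hf2 using hsel
  refine ⟨F.attach.image (fun s =>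
    {z : MahavierInf G | ∀ i : Fin (n+1), (z : ℕ → unitInterval) i.1 ∈ f s.1 i}), ?_, ?_, ?_⟩
  · intro s hs
    simp only [Finset.coe_image, Set.mem_image] at hs
    obtain ⟨⟨t, ht⟩, _, rfl⟩ := hs
    exact cyl_mem_dynJoin T hT α _ (hf1 t ht)
  · exact Finset.card_image_le.trans (by simp)
  · intro z _
    have hP : projn n ↑z ∈ PmSet G n := ⟨↑z, z.2, rfl⟩
    obtain ⟨s, hsF, hzs⟩ := hcov hP
    refine ⟨{w : MahavierInf G | ∀ i : Fin (n+1), (w : ℕ → unitInterval) i.1 ∈ f s i}, ?_, ?_⟩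
    · simp only [Finset.coe_image, Set.mem_image]
      exact ⟨⟨s, hsF⟩, Finset.mem_attach _ _, rfl⟩
    · intro i
      rw [hf2 s hsF] at hzs
      exact hzs i

omit hT in
/-- Refining the cover refines the joins. -/
lemma dynJoin_refine {V U : Set (Set (MahavierInf G))}
    (h : ∀ v ∈ V, ∃ u ∈ U, v ⊆ u) (n : ℕ) :
    ∀ s ∈ dynJoin T V n, ∃ s' ∈ dynJoin T U n, s ⊆ s' := by
  rintro s ⟨f, hf, rfl⟩
  classical
  choose u hu hsub using fun i => h (f i) (hf i)
  refine ⟨⋂ i, T^[i.1] ⁻¹' u i, ⟨u, hu, rfl⟩, ?_⟩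
  intro z hz
  simp only [Set.mem_iInter, Set.mem_preimage] at hz ⊢
  exact fun i => hsub i (hz i)

/-- Every `(n+K)`-join of the coordinate cover is an `n`-join of `(K+1)`-cylinders. -/
lemma dynJoin_Ucov_subset_VK (α : Finset (Set unitInterval)) (K n : ℕ) :
    dynJoin T (Ucov G α) (n+K) ⊆ dynJoin T (VK G α K) n := by
  rintro s ⟨f, hf, rfl⟩
  classical
  have hf' : ∀ i, ∃ A ∈ α, {z : MahavierInf G | (z : ℕ → unitInterval) 0 ∈ A} = f i := by
    intro i
    obtain ⟨A, hA1, hA2⟩ := hf i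
    exact ⟨A, by simpa using hA1, hA2⟩
  choose A hA hfA using hf'
  refine ⟨fun j => {z : MahavierInf G |
      ∀ i : Fin (K+1), (z : ℕ → unitInterval) i.1 ∈ A ⟨j.1+i.1, by omega⟩},
    fun j => ⟨fun i => A ⟨j.1+i.1, by omega⟩, fun i => hA _, rfl⟩, ?_⟩
  ext z
  constructor
  · intro hz
    simp only [Set.mem_iInter, Set.mem_preimage] at hz ⊢
    intro j
    simp only [Set.mem_setOf_eq, iterate_apply T hT]
    intro i
    have h1 := hz ⟨j.1 + i.1, by omega⟩
    rw [← hfA ⟨j.1 + i.1, by omega⟩] at h1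
    have h2 : ((T^[j.1+i.1] z : MahavierInf G) : ℕ → unitInterval) 0 ∈ A ⟨j.1+i.1, by omega⟩ := h1
    rw [iterate_apply T hT] at h2
    simpa using h2
  · intro hz
    simp only [Set.mem_iInter, Set.mem_preimage] at hz ⊢
    intro t
    rw [← hfA t]
    show ((T^[t.1] z : MahavierInf G) : ℕ → unitInterval) 0 ∈ A t
    rw [iterate_apply T hT]
    have h1 := hz ⟨t.1 - min t.1 K, by omega⟩
    simp only [Set.mem_setOf_eq, iterate_apply T hT] at h1
    have h2 := h1 ⟨min t.1 K, by omega⟩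
    have he : t.1 - min t.1 K + min t.1 K = t.1 := by omega
    rw [show (⟨t.1 - min t.1 K + min t.1 K, by omega⟩ : Fin (n+K+1)) = t from Fin.ext (by simp [he])] at h2
    simpa [he] using h2

end Shift

section GoalASetup

def projK (K : ℕ) (z : MahavierInf G) : Fin (K+1) → unitInterval :=
  fun i => (z : ℕ → unitInterval) i.1

lemma continuous_projK (K : ℕ) : Continuous (projK (G := G) K) :=
  continuous_pi (fun i => (continuous_apply i.1).comp continuous_subtype_val)

lemma compactSpace_mahavierInf (hGcl : IsClosed G) : CompactSpace (MahavierInf G) :=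
  isCompact_iff_compactSpace.mp (isClosed_mahavierInf G hGcl).isCompact

lemma exists_box_cover (hGcl : IsClosed G) {U : Set (Set (MahavierInf G))}
    (hU : IsOpenCover U) :
    ∃ (K : ℕ) (J : Finset (MahavierInf G)) (B : MahavierInf G → Set (Fin (K+1) → unitInterval)),
      (∀ q ∈ J, IsOpen (B q)) ∧
      (∀ q ∈ J, ∃ u ∈ U, {z : MahavierInf G | projK K z ∈ B q} ⊆ u) ∧
      (∀ z : MahavierInf G, ∃ q ∈ J, projK K z ∈ B q) := by
  classical
  have hpoint : ∀ z : MahavierInf G, ∃ (k : ℕ) (t : ℕ → Set unitInterval),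
      (∀ i, IsOpen (t i)) ∧ (∀ i, (z : ℕ → unitInterval) i ∈ t i) ∧
      ∃ u ∈ U, {w : MahavierInf G | ∀ i, i ≤ k → (w : ℕ → unitInterval) i ∈ t i} ⊆ u := by
    intro z
    have hz : z ∈ ⋃₀ U := by rw [hU.2]; trivial
    obtain ⟨u, huU, hzu⟩ := hz
    obtain ⟨w, hwopen, hwu⟩ := isOpen_induced_iff.mp (hU.1 u huU)
    have hzw : (z : ℕ → unitInterval) ∈ w := by
      rw [← hwu] at hzu
      exact hzu
    obtain ⟨Ifin, t, ht, hsub⟩ := isOpen_pi_iff.mp hwopen _ hzw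
    refine ⟨Ifin.sup id, fun i => if i ∈ Ifin then t i else univ, ?_, ?_, u, huU, ?_⟩
    · intro i
      by_cases h : i ∈ Ifin <;> simp only [h, if_true, if_false]
      · exact (ht i h).1
      · exact isOpen_univ
    · intro i
      by_cases h : i ∈ Ifin <;> simp only [h, if_true, if_false]
      · exact (ht i h).2
      · trivial
    · intro v hv
      rw [← hwu]
      apply hsub
      intro i hi
      have h1 := hv i (Finset.le_sup (f := id) hi)
      simp only [Set.mem_ite_univ_right] at h1
      exact h1 hi
  choose k t ht1 ht2 u huU hsubU using hpoint
  have : CompactSpace (MahavierInf G) := compactSpace_mahavierInf hGcl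
  have hopen : ∀ z : MahavierInf G,
      IsOpen {w : MahavierInf G | ∀ i, i ≤ k z → (w : ℕ → unitInterval) i ∈ t z i} := by
    intro z
    have heq : {w : MahavierInf G | ∀ i, i ≤ k z → (w : ℕ → unitInterval) i ∈ t z i} =
        ⋂ i ∈ Set.Iic (k z), (fun w : MahavierInf G => (w : ℕ → unitInterval) i) ⁻¹' t z i := by
      ext w; simp [Set.mem_Iic]
    rw [heq]
    exact (Set.finite_Iic _).isOpen_biInter (fun i _ =>
      (ht1 z i).preimage ((continuous_apply i).comp continuous_subtype_val))
  have hcovuniv : (univ : Set (MahavierInf G)) ⊆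
      ⋃ z : MahavierInf G, {w : MahavierInf G | ∀ i, i ≤ k z → (w : ℕ → unitInterval) i ∈ t z i} := by
    intro z _
    exact Set.mem_iUnion.mpr ⟨z, fun i _ => ht2 z i⟩
  obtain ⟨J, hJ⟩ := isCompact_univ.elim_finite_subcover _ hopen hcovuniv
  set K : ℕ := J.sup k with hK
  refine ⟨K, J, fun q => {v : Fin (K+1) → unitInterval | ∀ i : Fin (K+1), i.1 ≤ k q → v i ∈ t q i.1},
    ?_, ?_, ?_⟩
  · intro q _
    show IsOpen {v : Fin (K+1) → unitInterval | ∀ i : Fin (K+1), i.1 ≤ k q → v i ∈ t q i.1}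
    have heq : {v : Fin (K+1) → unitInterval | ∀ i : Fin (K+1), i.1 ≤ k q → v i ∈ t q i.1} =
        ⋂ i : Fin (K+1), ⋂ (_ : i.1 ≤ k q), (fun v : Fin (K+1) → unitInterval => v i) ⁻¹' t q i.1 := by
      ext v; simp
    rw [heq]
    exact isOpen_iInter_of_finite (fun i => isOpen_iInter_of_finite (fun _ =>
      (ht1 q _).preimage (continuous_apply i)))
  · intro q hq
    refine ⟨u q, huU q, ?_⟩
    intro z hz
    apply hsubU q
    intro i hi
    have hiK : i < K + 1 := by
      have : k q ≤ K := Finset.le_sup hq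
      omega
    exact hz ⟨i, hiK⟩ hi
  · intro z
    obtain ⟨q, hqJ, hzq⟩ := Set.mem_iUnion₂.mp (hJ (Set.mem_univ z))
    exact ⟨q, hqJ, fun i hi => hzq i.1 hi⟩

lemma exists_minimal_subcover (β : Finset (Set unitInterval))
    (hprop : ∀ u ∈ β, IsOpen u ∧ u.OrdConnected)
    (hcov : ⋃₀ (β : Set (Set unitInterval)) = univ) :
    ∃ α, α ⊆ β ∧ IsMinimalIntervalCover α := by
  classical
  induction β using Finset.strongInduction with
  | _ β ih =>
    by_cases h : ∃ γ, γ ⊂ β ∧ ⋃₀ (γ : Set (Set unitInterval)) = univ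
    · obtain ⟨γ, hsub, hγcov⟩ := h
      obtain ⟨α, h1, h2⟩ := ih γ hsub (fun v hv => hprop v (hsub.1 hv)) hγcov
      exact ⟨α, h1.trans hsub.1, h2⟩
    · push_neg at h
      refine ⟨β, subset_rfl, hprop, hcov, ?_⟩
      intro γ hγsub hγcov
      by_contra hne
      exact h γ (ssubset_of_subset_of_ne hγsub hne) hγcov

lemma exists_fine_minimal_cover (δ : ℝ) (hδ : 0 < δ) :
    ∃ α : Finset (Set unitInterval), IsMinimalIntervalCover α ∧
      ∀ s ∈ α, ∀ x ∈ s, ∀ y ∈ s, dist x y < δ := by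
  classical
  obtain ⟨M, hM⟩ := exists_nat_gt (2/δ)
  have hM0 : (0:ℝ) < M := lt_of_le_of_lt (by positivity) hM
  set S : ℕ → Set unitInterval := fun j =>
    Subtype.val ⁻¹' (Set.Ioo (((j:ℝ)-1)/M) (((j:ℝ)+1)/M)) with hS
  set β : Finset (Set unitInterval) := (Finset.range (M+1)).image S with hβ
  have hprop : ∀ u ∈ β, IsOpen u ∧ u.OrdConnected := by
    intro v hv
    simp only [hβ, Finset.mem_image] at hv
    obtain ⟨j, _, rfl⟩ := hv
    constructor
    · exact isOpen_Ioo.preimage continuous_subtype_val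
    · constructor
      intro x hx y hy w hw
      simp only [hS, Set.mem_preimage, Set.mem_Ioo] at hx hy ⊢
      have h1 : (x:ℝ) ≤ (w:ℝ) := hw.1
      have h2 : (w:ℝ) ≤ (y:ℝ) := hw.2
      exact ⟨lt_of_lt_of_le hx.1 h1, lt_of_le_of_lt h2 hy.2⟩
  have hdiam : ∀ v ∈ β, ∀ x ∈ v, ∀ y ∈ v, dist x y < δ := by
    intro v hv x hx y hy
    simp only [hβ, Finset.mem_image] at hv
    obtain ⟨j, _, rfl⟩ := hv
    simp only [hS, Set.mem_preimage, Set.mem_Ioo] at hx hy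
    rw [Subtype.dist_eq, Real.dist_eq, abs_sub_lt_iff]
    have h2M : 2/M < δ := by
      rw [div_lt_iff₀ hM0]
      have : 2/δ * δ < M * δ := by
        apply mul_lt_mul_of_pos_right hM hδ
      rw [div_mul_cancel₀] at this
      · linarith
      · exact hδ.ne'
    have hlen : ((j:ℝ)+1)/M - ((j:ℝ)-1)/M = 2/M := by
      field_simp
      ring
    constructor <;> nlinarith [hx.1, hx.2, hy.1, hy.2]
  have hcov : ⋃₀ (β : Set (Set unitInterval)) = univ := by
    apply Set.eq_univ_of_forall
    intro x
    have hx0 : (0:ℝ) ≤ (x:ℝ) := x.2.1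
    have hx1 : (x:ℝ) ≤ 1 := x.2.2
    set j : ℕ := ⌊(x:ℝ) * M⌋₊ with hj
    have hjle : (j:ℝ) ≤ (x:ℝ) * M := Nat.floor_le (by positivity)
    have hjlt : (x:ℝ) * M < (j:ℝ) + 1 := Nat.lt_floor_add_one _
    have hjM : j ≤ M := by
      have : (x:ℝ) * M ≤ M := by nlinarith
      have h2 : (j:ℝ) ≤ (M:ℝ) := le_trans hjle this
      exact_mod_cast h2
    refine ⟨S j, ?_, ?_⟩
    · simp only [hβ, Finset.coe_image, Set.mem_image]
      exact ⟨j, by simp [Finset.mem_range]; omega, rfl⟩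
    · simp only [hS, Set.mem_preimage, Set.mem_Ioo]
      constructor
      · rw [div_lt_iff₀ hM0]
        linarith
      · rw [lt_div_iff₀ hM0]
        linarith
  obtain ⟨α, hαβ, hαmin⟩ := exists_minimal_subcover β hprop hcov
  exact ⟨α, hαmin, fun s hs => hdiam s (hαβ hs)⟩

/-- The key Goal-A refinement: any open cover of `𝐆` is refined, after a shift,
by cylinder covers coming from a minimal interval cover. -/
lemma exists_VK_refinement (hGcl : IsClosed G) (hGne : (MahavierInf G).Nonempty)
    {U : Set (Set (MahavierInf G))} (hU : IsOpenCover U) :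
    ∃ (K : ℕ) (α : Finset (Set unitInterval)), IsMinimalIntervalCover α ∧
      ∀ v ∈ VK G α K, ∃ u ∈ U, v ⊆ u := by
  classical
  obtain ⟨K, J, B, hBopen, hBu, hBcov⟩ := exists_box_cover hGcl hU
  have : CompactSpace (MahavierInf G) := compactSpace_mahavierInf hGcl
  have hcomp : IsCompact (projK (G := G) K '' univ) :=
    isCompact_univ.image (continuous_projK K)
  have hsubcov : projK (G := G) K '' univ ⊆ ⋃ q : {q // q ∈ J}, B q.1 := by
    rintro x ⟨z, _, rfl⟩
    obtain ⟨q, hqJ, hzq⟩ := hBcov z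
    exact Set.mem_iUnion.mpr ⟨⟨q, hqJ⟩, hzq⟩
  obtain ⟨δ, hδ, hLeb⟩ := lebesgue_number_lemma_of_metric hcomp
    (fun q : {q // q ∈ J} => hBopen q.1 q.2) hsubcov
  obtain ⟨α, hαmin, hαdiam⟩ := exists_fine_minimal_cover δ hδ
  refine ⟨K, α, hαmin, ?_⟩
  rintro v ⟨g, hg, rfl⟩
  by_cases hv : {z : MahavierInf G | ∀ i : Fin (K+1), (z : ℕ → unitInterval) i.1 ∈ g i}.Nonempty
  · obtain ⟨z₀, hz₀⟩ := hv
    obtain ⟨q, hq⟩ := hLeb (projK K z₀) ⟨z₀, Set.mem_univ _, rfl⟩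
    obtain ⟨u, huU, husub⟩ := hBu q.1 q.2
    refine ⟨u, huU, ?_⟩
    intro z hz
    apply husub
    show projK K z ∈ B q.1
    apply hq
    rw [Metric.mem_ball]
    rw [dist_pi_lt_iff hδ]
    intro i
    exact hαdiam (g i) (hg i) _ (hz i) _ (hz₀ i)
  · rw [Set.not_nonempty_iff_eq_empty] at hv
    rw [hv]
    obtain ⟨z, hz⟩ := hGne
    have : (⟨z, hz⟩ : MahavierInf G) ∈ ⋃₀ U := by rw [hU.2]; trivial
    obtain ⟨u, huU, _⟩ := this
    exact ⟨u, huU, Set.empty_subset u⟩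

end GoalASetup

section Main

variable (T : MahavierInf G → MahavierInf G)
  (hT : ∀ z : MahavierInf G, (T z : ℕ → unitInterval) = shiftMap ↑z)

include hT

/-- Goal B: the entropy term for a cover `α` is bounded by the AKM term for `Ucov α`. -/
lemma goalB (hGcl : IsClosed G) (hne : (MahavierInf G).Nonempty)
    (α : Finset (Set unitInterval)) (hαo : ∀ u ∈ α, IsOpen u)
    (hαc : ⋃₀ (α : Set (Set unitInterval)) = univ) :
    Filter.limsup (fun m : ℕ => ENNReal.ofReal
        (Real.log (coverNum (MahavierFin G m) (gridCover α (m+1))) / m)) Filter.atTop ≤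
    Filter.limsup (fun n : ℕ => ENNReal.ofReal
        (Real.log (coverNum (univ : Set (MahavierInf G)) (dynJoin T (Ucov G α) n)) / n))
      Filter.atTop := by
  have hle : ∀ n : ℕ, 1 ≤ n →
      Filter.limsup (fun m : ℕ => ENNReal.ofReal
        (Real.log (coverNum (MahavierFin G m) (gridCover α (m+1))) / m)) Filter.atTop ≤
      ENNReal.ofReal
        (Real.log (coverNum (univ : Set (MahavierInf G)) (dynJoin T (Ucov G α) n)) / n) := by
    intro n hn
    refine le_trans (limsup_NN_le hGcl hne α hαo hαc n) ?_
    apply ENNReal.ofReal_le_ofReal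
    have h1 : BB G α n ≤ coverNum (univ : Set (MahavierInf G)) (dynJoin T (Ucov G α) n) :=
      BB_le_dynJoin T hT α hαc n
    have hB1 : 1 ≤ BB G α n := one_le_BB hne α hαc n
    have hBpos : (0:ℝ) < (BB G α n : ℝ) := by exact_mod_cast hB1
    have hlog1 : Real.log (BB G α n) ≤
        Real.log (coverNum (univ : Set (MahavierInf G)) (dynJoin T (Ucov G α) n)) :=
      Real.log_le_log hBpos (by exact_mod_cast h1)
    have hlogpos : (0:ℝ) ≤ Real.log (BB G α n) := Real.log_nonneg (by exact_mod_cast hB1)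
    have hn0 : (0:ℝ) < n := by exact_mod_cast hn
    calc Real.log (BB G α n) / ((n:ℝ)+1) ≤ Real.log (BB G α n) / n :=
          div_le_div_of_nonneg_left hlogpos hn0 (by linarith)
      _ ≤ _ := by gcongr
  exact Filter.le_limsup_of_frequently_le
    (((Filter.eventually_ge_atTop 1).mono (fun n hn => hle n hn)).frequently)
    (by isBoundedDefault)

/-- Goal A: the AKM term for any open cover is bounded by an entropy term. -/
lemma goalA (hGcl : IsClosed G) (hne : (MahavierInf G).Nonempty)
    {U : Set (Set (MahavierInf G))} (hU : IsOpenCover U) :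
    ∃ α : Finset (Set unitInterval), IsMinimalIntervalCover α ∧
      Filter.limsup (fun n : ℕ => ENNReal.ofReal
          (Real.log (coverNum (univ : Set (MahavierInf G)) (dynJoin T U n)) / n))
        Filter.atTop ≤
      Filter.limsup (fun m : ℕ => ENNReal.ofReal
          (Real.log (coverNum (MahavierFin G m) (gridCover α (m+1))) / m)) Filter.atTop := by
  classical
  obtain ⟨K, α, hαmin, href⟩ := exists_VK_refinement hGcl hne hU
  have hαo : ∀ u ∈ α, IsOpen u := fun u hu => (hαmin.1 u hu).1
  have hαc : ⋃₀ (α : Set (Set unitInterval)) = univ := hαmin.2.1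
  refine ⟨α, hαmin, ?_⟩
  have hα1 : 1 ≤ α.card := one_le_card_of_cover α hαc
  have hN1 : ∀ m, 1 ≤ NN G α m := one_le_NN hne α hαc
  -- the natural-number chain
  have hchain : ∀ n : ℕ,
      coverNum (univ : Set (MahavierInf G)) (dynJoin T U n) ≤ NN G α (n+K) := by
    intro n
    have hV0 : (CovSet (univ : Set (MahavierInf G)) (dynJoin T (VK G α K) n)).Nonempty := by
      obtain ⟨F, hF, hcov⟩ := dynJoin_Ucov_finite_cover T hT α hαc (n+K)
      exact ⟨F.card, F, fun s hs => dynJoin_Ucov_subset_VK T hT α K n (hF hs), rfl, hcov⟩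
    have h1 : coverNum (univ : Set (MahavierInf G)) (dynJoin T U n) ≤
        coverNum (univ : Set (MahavierInf G)) (dynJoin T (VK G α K) n) :=
      coverNum_anti_cover hV0 (dynJoin_refine T href n)
    have h2 : coverNum (univ : Set (MahavierInf G)) (dynJoin T (VK G α K) n) ≤
        coverNum (univ : Set (MahavierInf G)) (dynJoin T (Ucov G α) (n+K)) :=
      coverNum_le_of_cover_subset (dynJoin_Ucov_subset_VK T hT α K n)
        (dynJoin_covSet_nonempty T hT α hαc (n+K))
    have h3 : coverNum (univ : Set (MahavierInf G)) (dynJoin T (Ucov G α) (n+K)) ≤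
        BB G α (n+K) := dynJoin_le_BB T hT α hαc (n+K)
    have h4 : BB G α (n+K) ≤ NN G α (n+K) :=
      coverNum_mono_set (pmSet_subset_mahavierFin (n+K)) (grid_covSet_nonempty α hαc _ _)
    omega
  -- real-number bound
  set C : ℝ := 2 * K * Real.log α.card with hC
  have hlogα : (0:ℝ) ≤ Real.log α.card := Real.log_nonneg (by exact_mod_cast hα1)
  have hC0 : 0 ≤ C := by positivity
  have hbound : ∀ n : ℕ, 1 ≤ n →
      Real.log (coverNum (univ : Set (MahavierInf G)) (dynJoin T U n)) / n ≤
        Real.log (NN G α (n+K)) / (n+K) + C / n := by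
    intro n hn
    have hn0 : (0:ℝ) < n := by exact_mod_cast hn
    have hnK0 : (0:ℝ) < (n:ℝ)+K := by positivity
    have hNpos : (0:ℝ) < (NN G α (n+K) : ℝ) := by exact_mod_cast hN1 (n+K)
    have hlogN : (0:ℝ) ≤ Real.log (NN G α (n+K)) := Real.log_nonneg (by exact_mod_cast hN1 (n+K))
    have ha : Real.log (coverNum (univ : Set (MahavierInf G)) (dynJoin T U n)) ≤
        Real.log (NN G α (n+K)) := by
      rcases Nat.eq_zero_or_pos (coverNum (univ : Set (MahavierInf G)) (dynJoin T U n)) with h | h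
      · rw [h]
        simpa using hlogN
      · apply Real.log_le_log (by exact_mod_cast h)
        exact_mod_cast hchain n
    have hb : Real.log (NN G α (n+K)) ≤ ((n:ℝ)+K+1) * Real.log α.card := by
      calc Real.log (NN G α (n+K)) ≤ Real.log ((α.card : ℝ)^(n+K+1)) := by
            apply Real.log_le_log hNpos
            exact_mod_cast NN_le_pow α hαc (n+K)
        _ = ((n:ℝ)+K+1) * Real.log α.card := by rw [Real.log_pow]; push_cast; ring
    -- log N/(n) = log N/(n+K) + log N * K/(n(n+K))
    have hsplit : Real.log (NN G α (n+K)) / n =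
        Real.log (NN G α (n+K)) / ((n:ℝ)+K) +
          Real.log (NN G α (n+K)) * K / (n * ((n:ℝ)+K)) := by
      field_simp
    have htail : Real.log (NN G α (n+K)) * K / (n * ((n:ℝ)+K)) ≤ C / n := by
      rw [div_le_div_iff₀ (by positivity) hn0, hC]
      have h1 : (n:ℝ)+K+1 ≤ 2*((n:ℝ)+K) := by
        have : (1:ℝ) ≤ n := by exact_mod_cast hn
        linarith
      calc Real.log (NN G α (n+K)) * K * n ≤ (((n:ℝ)+K+1) * Real.log α.card) * K * n := by
            apply mul_le_mul_of_nonneg_right _ (by positivity)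
            apply mul_le_mul_of_nonneg_right hb (by positivity)
        _ ≤ (2*((n:ℝ)+K) * Real.log α.card) * K * n := by
            apply mul_le_mul_of_nonneg_right _ (by positivity)
            apply mul_le_mul_of_nonneg_right _ (by positivity)
            apply mul_le_mul_of_nonneg_right h1 hlogα
        _ = 2 * (K:ℝ) * Real.log α.card * (n * ((n:ℝ)+K)) := by ring
    calc Real.log (coverNum (univ : Set (MahavierInf G)) (dynJoin T U n)) / n
        ≤ Real.log (NN G α (n+K)) / n := by gcongr
      _ = _ + _ := hsplit
      _ ≤ Real.log (NN G α (n+K)) / ((n:ℝ)+K) + C / n := by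
          apply add_le_add_right htail
  -- pass to ENNReal limsups
  set e : ℕ → ENNReal := fun m => ENNReal.ofReal
      (Real.log (coverNum (MahavierFin G m) (gridCover α (m+1))) / m) with he
  set f : ℕ → ENNReal := fun n => ENNReal.ofReal
      (Real.log (coverNum (univ : Set (MahavierInf G)) (dynJoin T U n)) / n) with hf
  set h : ℕ → ENNReal := fun n => ENNReal.ofReal (C / n) with hh
  have hfeh : ∀ n : ℕ, 1 ≤ n → f n ≤ e (n+K) + h n := by
    intro n hn
    have h1 := hbound n hn
    calc f n ≤ ENNReal.ofReal (Real.log (NN G α (n+K)) / ((n:ℝ)+K) + C / n) :=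
          ENNReal.ofReal_le_ofReal h1
      _ ≤ ENNReal.ofReal (Real.log (NN G α (n+K)) / ((n:ℝ)+K)) + h n := ENNReal.ofReal_add_le
      _ = e (n+K) + h n := by
          congr 1
          congr 1
          push_cast
          rfl
  have hh0 : Filter.Tendsto h Filter.atTop (𝓝 0) := by
    rw [hh]
    have := ENNReal.tendsto_ofReal (tendsto_const_div_atTop_nhds_zero_nat C)
    simpa using this
  set L : ENNReal := Filter.limsup e Filter.atTop with hL
  by_cases hLtop : L = ⊤
  · exact le_of_le_of_eq le_top hLtop.symm
  · apply ENNReal.le_of_forall_pos_le_add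
    intro ε hε _
    have hε2 : ((ε/2 : NNReal) : ENNReal) ≠ 0 := by
      simp only [ne_eq, ENNReal.coe_eq_zero]
      positivity
    have hLlt : L < L + (ε/2 : NNReal) := ENNReal.lt_add_right hLtop hε2
    have hev1 : ∀ᶠ m in Filter.atTop, e m < L + (ε/2 : NNReal) :=
      Filter.eventually_lt_of_limsup_lt hLlt
    obtain ⟨N, hN⟩ := Filter.eventually_atTop.mp hev1
    have hev2 : ∀ᶠ n in Filter.atTop, h n < (ε/2 : NNReal) :=
      Filter.Tendsto.eventually_lt_const (by
        simp only [ENNReal.coe_pos]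
        positivity) hh0
    have hev : ∀ᶠ n in Filter.atTop, f n ≤ L + ↑ε := by
      filter_upwards [Filter.eventually_ge_atTop (max N 1), hev2] with n hn h2
      have h3 : e (n+K) < L + (ε/2 : NNReal) := hN (n+K) (by omega)
      calc f n ≤ e (n+K) + h n := hfeh n (by omega)
        _ ≤ (L + (ε/2 : NNReal)) + (ε/2 : NNReal) := add_le_add h3.le h2.le
        _ = L + ↑ε := by
            rw [add_assoc, ← ENNReal.coe_add]
            congr 1
            rw [add_halves]
    exact Filter.limsup_le_of_le (by isBoundedDefault) hev

end Main


end EntPf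

/-- For closed `G ⊆ [0,1]²` with `𝐆 = ⋆_{i=1}^∞ G ≠ ∅` and `σ(𝐆) = 𝐆`,
`ent(G)` equals the Adler–Konheim–McAndrew topological entropy of the shift map
restricted to `𝐆`. -/
theorem ent_eq_akmEntropy_shift
    (G : Set (unitInterval × unitInterval)) (hGcl : IsClosed G)
    (hne : (MahavierInf G).Nonempty)
    (hσ : shiftMap '' MahavierInf G = MahavierInf G)
    (T : MahavierInf G → MahavierInf G)
    (hT : ∀ z : MahavierInf G, (T z : ℕ → unitInterval) = shiftMap ↑z) :
    ent G = akmEntropy T := by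
  classical
  apply le_antisymm
  · refine iSup_le ?_
    rintro ⟨α, hαmin⟩
    show entOf G α ≤ _
    have hent : entOf G α = _ := if_pos hne
    rw [hent]
    have hOC : IsOpenCover (EntPf.Ucov G α) := by
      constructor
      · rintro u ⟨A, hA, rfl⟩
        exact ((hαmin.1 A hA).1).preimage ((continuous_apply 0).comp continuous_subtype_val)
      · apply Set.eq_univ_of_forall
        intro z
        have hz0 : (z : ℕ → unitInterval) 0 ∈ ⋃₀ (α : Set (Set unitInterval)) := by
          rw [hαmin.2.1]; trivial
        obtain ⟨A, hA, hzA⟩ := hz0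
        exact ⟨{w : MahavierInf G | (w : ℕ → unitInterval) 0 ∈ A}, ⟨A, hA, rfl⟩, hzA⟩
    refine le_trans (EntPf.goalB T hT hGcl hne α (fun u hu => (hαmin.1 u hu).1) hαmin.2.1) ?_
    exact le_iSup_of_le ⟨EntPf.Ucov G α, hOC⟩ le_rfl
  · refine iSup_le ?_
    rintro ⟨U, hU⟩
    obtain ⟨α, hαmin, hle⟩ := EntPf.goalA T hT hGcl hne hU
    refine le_trans hle ?_
    refine le_iSup_of_le (⟨α, hαmin⟩ :
      {α : Finset (Set unitInterval) // IsMinimalIntervalCover α}) ?_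
    show _ ≤ entOf G α
    have hent : entOf G α = _ := if_pos hne
    exact hent.symm.le
end
end

section
/- If f : [0,1] → [0,1] is a continuous surjection and G = {(f(t), t) : t ∈ [0,1]} is the graph of f^{-1}, then the Adler–Konheim–McAndrew topological entropy h(f) equals ent(G). -/
open Set Filter Topology unitInterval
open scoped Classical

noncomputable section

namespace AkmAux

open unitInterval

lemma coverNum_le_general {X Y : Type*} (K : Set X) (L : Set Y)
    (U : Set (Set X)) (V : Set (Set Y)) (φ : Set X → Set Y)
    (hφ : ∀ s ∈ U, φ s ∈ V)
    (hcov : ∀ F : Finset (Set X), ↑F ⊆ U → K ⊆ ⋃₀ ↑F → L ⊆ ⋃₀ ↑(F.image φ))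
    (hne : {n | ∃ F : Finset (Set X), ↑F ⊆ U ∧ F.card = n ∧ K ⊆ ⋃₀ ↑F}.Nonempty) :
    coverNum L V ≤ coverNum K U := by
  obtain ⟨F, hFU, hFcard, hFcov⟩ := Nat.sInf_mem hne
  have h1 : coverNum L V ≤ (F.image φ).card := by
    apply Nat.sInf_le
    refine ⟨F.image φ, ?_, rfl, hcov F hFU hFcov⟩
    intro s hs
    simp only [Finset.coe_image, Set.mem_image] at hs
    obtain ⟨t, ht, rfl⟩ := hs
    exact hφ t (hFU ht)
  exact h1.trans (le_of_le_of_eq Finset.card_image_le hFcard)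

lemma gridCover_finite (α : Finset (Set unitInterval)) (k : ℕ) :
    (gridCover α k).Finite := by
  have hsub : gridCover α k ⊆
      (fun g : Fin k → Set unitInterval => {x | ∀ i, x i ∈ g i}) ''
        (Set.univ.pi fun _ => (α : Set (Set unitInterval))) := by
    rintro s ⟨g, hg, rfl⟩
    exact ⟨g, fun i _ => hg i, rfl⟩
  exact ((Set.Finite.pi fun _ => α.finite_toSet).image _).subset hsub

lemma dynJoin_finite {X : Type*} (T : X → X) (α : Finset (Set X)) (n : ℕ) :
    (dynJoin T ↑α n).Finite := by
  have hsub : dynJoin T ↑α n ⊆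
      (fun g : Fin (n + 1) → Set X => ⋂ i, T^[i.1] ⁻¹' g i) ''
        (Set.univ.pi fun _ => (α : Set (Set X))) := by
    rintro s ⟨g, hg, rfl⟩
    exact ⟨g, fun i _ => hg i, rfl⟩
  exact ((Set.Finite.pi fun _ => α.finite_toSet).image _).subset hsub

lemma grid_cover_spec (α : Finset (Set unitInterval))
    (hcov : ⋃₀ (α : Set (Set unitInterval)) = Set.univ) (k : ℕ)
    (K : Set (Fin k → unitInterval)) :
    {n | ∃ F : Finset (Set (Fin k → unitInterval)),
        ↑F ⊆ gridCover α k ∧ F.card = n ∧ K ⊆ ⋃₀ ↑F}.Nonempty := by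
  have hfin := gridCover_finite α k
  refine ⟨hfin.toFinset.card, hfin.toFinset, by simp [hfin.coe_toFinset], rfl, ?_⟩
  intro x _
  have hg : ∀ i : Fin k, ∃ a ∈ α, x i ∈ a := by
    intro i
    have hx : x i ∈ ⋃₀ (α : Set (Set unitInterval)) := hcov ▸ Set.mem_univ _
    simpa [Set.mem_sUnion] using hx
  choose g hg1 hg2 using hg
  refine ⟨{y | ∀ i, y i ∈ g i}, ?_, hg2⟩
  rw [hfin.coe_toFinset]
  exact ⟨g, hg1, rfl⟩

lemma dynJoin_cover_spec {X : Type*} (T : X → X) (α : Finset (Set X))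
    (hcov : ⋃₀ (α : Set (Set X)) = Set.univ) (n : ℕ) :
    {m | ∃ F : Finset (Set X),
        ↑F ⊆ dynJoin T ↑α n ∧ F.card = m ∧ (Set.univ : Set X) ⊆ ⋃₀ ↑F}.Nonempty := by
  have hfin := dynJoin_finite T α n
  refine ⟨hfin.toFinset.card, hfin.toFinset, by simp [hfin.coe_toFinset], rfl, ?_⟩
  intro x _
  have hg : ∀ i : Fin (n + 1), ∃ a ∈ α, T^[i.1] x ∈ a := by
    intro i
    have hx : T^[i.1] x ∈ ⋃₀ (α : Set (Set X)) := hcov ▸ Set.mem_univ _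
    simpa [Set.mem_sUnion] using hx
  choose g hg1 hg2 using hg
  refine ⟨⋂ i, T^[i.1] ⁻¹' g i, ?_, ?_⟩
  · rw [hfin.coe_toFinset]
    exact ⟨g, hg1, rfl⟩
  · simp only [Set.mem_iInter, Set.mem_preimage]
    exact hg2

/-- The graph of `f⁻¹`. -/
def Gr (f : unitInterval → unitInterval) : Set (unitInterval × unitInterval) :=
  {p : unitInterval × unitInterval | ∃ t, p = (f t, t)}

/-- The backward-orbit embedding of `[0,1]` into the Mahavier product. -/
def ee (f : unitInterval → unitInterval) (m : ℕ) (t : unitInterval) :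
    Fin (m + 1) → unitInterval := fun i => f^[m - i.1] t

lemma ee_mem (f : unitInterval → unitInterval) (m : ℕ) (t : unitInterval) :
    ee f m t ∈ MahavierFin (Gr f) m := by
  intro i
  refine ⟨f^[m - (i.1 + 1)] t, ?_⟩
  have h : m - i.1 = (m - (i.1 + 1)) + 1 := by omega
  have : ee f m t i.castSucc = f (f^[m - (i.1 + 1)] t) := by
    show f^[m - i.1] t = _
    rw [h, Function.iterate_succ_apply']
  rw [Prod.mk.injEq]
  exact ⟨this, rfl⟩

lemma mem_eq_ee (f : unitInterval → unitInterval) (m : ℕ)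
    {x : Fin (m + 1) → unitInterval} (hx : x ∈ MahavierFin (Gr f) m) :
    ∀ i : Fin (m + 1), x i = f^[m - i.1] (x (Fin.last m)) := by
  have hx' : ∀ i : Fin m, x i.castSucc = f (x i.succ) := by
    intro i
    obtain ⟨t, ht⟩ := hx i
    rw [Prod.mk.injEq] at ht
    rw [ht.1, ht.2]
  have key : ∀ k, ∀ hk : k ≤ m, x ⟨m - k, by omega⟩ = f^[k] (x (Fin.last m)) := by
    intro k
    induction k with
    | zero =>
      intro _
      have : (⟨m - 0, by omega⟩ : Fin (m + 1)) = Fin.last m := by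
        apply Fin.ext; simp [Fin.last]
      rw [this]; rfl
    | succ k ih =>
      intro hk
      have hk' : k ≤ m := by omega
      set i : Fin m := ⟨m - (k + 1), by omega⟩ with hi
      have e1 : i.castSucc = (⟨m - (k + 1), by omega⟩ : Fin (m + 1)) := rfl
      have e2 : i.succ = (⟨m - k, by omega⟩ : Fin (m + 1)) := by
        apply Fin.ext; show (m - (k+1)) + 1 = m - k; omega
      have := hx' i
      rw [e1, e2, ih hk'] at this
      rw [this, Function.iterate_succ_apply']
  intro i
  have hi : i.1 ≤ m := by omega
  have := key (m - i.1) (by omega)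
  have hii : (⟨m - (m - i.1), by omega⟩ : Fin (m + 1)) = i := by
    apply Fin.ext; show m - (m - i.1) = i.1; omega
  rwa [hii] at this

/-- Index reversal. -/
def rev (m : ℕ) (i : Fin (m + 1)) : Fin (m + 1) := ⟨m - i.1, by omega⟩

lemma coverNum_grid_eq (f : unitInterval → unitInterval) (α : Finset (Set unitInterval))
    (hcov : ⋃₀ (α : Set (Set unitInterval)) = Set.univ) (m : ℕ) :
    coverNum (MahavierFin (Gr f) m) (gridCover α (m + 1)) =
      coverNum Set.univ (dynJoin f ↑α m) := by
  apply le_antisymm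
  · -- grid cover number ≤ join cover number: push joins to grids
    set φ : Set unitInterval → Set (Fin (m + 1) → unitInterval) :=
      fun s => if h : s ∈ dynJoin f (↑α : Set (Set unitInterval)) m then
        {x | ∀ i, x i ∈ h.choose (rev m i)} else ∅ with hφdef
    apply coverNum_le_general Set.univ (MahavierFin (Gr f) m)
      (dynJoin f ↑α m) (gridCover α (m + 1)) φ
    · intro s hs
      simp only [hφdef, dif_pos hs]
      exact ⟨fun i => hs.choose (rev m i), fun i => hs.choose_spec.1 (rev m i), rfl⟩
    · intro F hFU hFcov x hx
      have hxt := mem_eq_ee f m hx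
      set t := x (Fin.last m) with htdef
      obtain ⟨s, hsF, hts⟩ := hFcov (Set.mem_univ t)
      refine ⟨φ s, ?_, ?_⟩
      · simp only [Finset.coe_image, Set.mem_image]
        exact ⟨s, hsF, rfl⟩
      · have hs : s ∈ dynJoin f (↑α : Set (Set unitInterval)) m := hFU hsF
        simp only [hφdef, dif_pos hs]
        intro i
        have hspec := hs.choose_spec.2
        rw [hspec] at hts
        have hmi := Set.mem_iInter.mp hts (rev m i)
        rw [hxt i]
        exact hmi
    · exact dynJoin_cover_spec f α hcov m
  · -- join cover number ≤ grid cover number: pull grids back along ee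
    apply coverNum_le_general (MahavierFin (Gr f) m) Set.univ
      (gridCover α (m + 1)) (dynJoin f ↑α m) (fun s => ee f m ⁻¹' s)
    · rintro s ⟨g, hg, rfl⟩
      refine ⟨fun i => g (rev m i), fun i => hg _, ?_⟩
      ext t
      simp only [Set.mem_preimage, Set.mem_setOf_eq, Set.mem_iInter]
      constructor
      · intro h i
        have := h (rev m i)
        have hmm : m - (m - i.1) = i.1 := by omega
        show f^[i.1] t ∈ g (rev m i)
        rw [← hmm]
        exact this
      · intro h i
        have := h (rev m i)
        have hmm : m - (m - i.1) = i.1 := by omega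
        have hrr : rev m (rev m i) = i := by
          apply Fin.ext; show m - (m - i.1) = i.1; omega
        rw [hrr] at this
        show ee f m t i ∈ g i
        show f^[m - i.1] t ∈ g i
        exact this
    · intro F hFU hFcov t _
      obtain ⟨s, hsF, hts⟩ := hFcov (ee_mem f m t)
      refine ⟨ee f m ⁻¹' s, ?_, hts⟩
      simp only [Finset.coe_image, Set.mem_image]
      exact ⟨s, hsF, rfl⟩
    · exact grid_cover_spec α hcov (m + 1) _

lemma mahavierInf_nonempty (f : unitInterval → unitInterval)
    (hs : Function.Surjective f) : (MahavierInf (Gr f)).Nonempty := by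
  choose g hg using hs
  refine ⟨fun n => g^[n] 0, fun i => ⟨g^[i + 1] 0, ?_⟩⟩
  rw [Prod.mk.injEq]
  refine ⟨?_, rfl⟩
  show g^[i] 0 = f (g^[i + 1] 0)
  rw [Function.iterate_succ_apply', hg]

lemma log_nat_mono {a b : ℕ} (h : a ≤ b) : Real.log a ≤ Real.log b := by
  rcases Nat.eq_zero_or_pos a with h0 | hpos
  · subst h0
    simp only [Nat.cast_zero, Real.log_zero]
    rcases Nat.eq_zero_or_pos b with h0 | hpos
    · simp [h0]
    · exact Real.log_nonneg (by exact_mod_cast hpos)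
  · exact Real.log_le_log (by exact_mod_cast hpos) (by exact_mod_cast h)

lemma limsup_log_div_mono (a b : ℕ → ℕ) (h : ∀ n, a n ≤ b n) :
    Filter.limsup (fun n : ℕ => ENNReal.ofReal (Real.log (a n) / n)) Filter.atTop ≤
      Filter.limsup (fun n : ℕ => ENNReal.ofReal (Real.log (b n) / n)) Filter.atTop := by
  apply Filter.limsup_le_limsup (Filter.Eventually.of_forall fun n => ?_)
  apply ENNReal.ofReal_le_ofReal
  rcases Nat.eq_zero_or_pos n with rfl | hn
  · simp
  · have hn' : (0 : ℝ) < n := by exact_mod_cast hn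
    exact div_le_div_of_nonneg_right (log_nat_mono (h n)) hn'.le |>.trans_eq rfl

lemma coverNum_dynJoin_le_of_refine (f : unitInterval → unitInterval)
    (U : Set (Set unitInterval)) (α : Finset (Set unitInterval))
    (hcov : ⋃₀ (α : Set (Set unitInterval)) = Set.univ)
    (href : ∀ a ∈ (α : Set (Set unitInterval)), ∃ u ∈ U, a ⊆ u) (n : ℕ) :
    coverNum Set.univ (dynJoin f U n) ≤ coverNum Set.univ (dynJoin f ↑α n) := by
  set enl : Set unitInterval → Set unitInterval :=
    fun a => if h : ∃ u ∈ U, a ⊆ u then h.choose else ∅ with henl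
  have henl1 : ∀ a ∈ (α : Set (Set unitInterval)), enl a ∈ U ∧ a ⊆ enl a := by
    intro a ha
    have h := href a ha
    simp only [henl, dif_pos h]
    exact ⟨h.choose_spec.1, h.choose_spec.2⟩
  set φ : Set unitInterval → Set unitInterval :=
    fun s => if h : s ∈ dynJoin f (↑α : Set (Set unitInterval)) n then
      ⋂ i, f^[i.1] ⁻¹' enl (h.choose i) else ∅ with hφdef
  apply coverNum_le_general Set.univ Set.univ (dynJoin f ↑α n) (dynJoin f U n) φ
  · intro s hs
    simp only [hφdef, dif_pos hs]
    exact ⟨fun i => enl (hs.choose i),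
      fun i => (henl1 _ (hs.choose_spec.1 i)).1, rfl⟩
  · intro F hFU hFcov x hx
    obtain ⟨s, hsF, hxs⟩ := hFcov (Set.mem_univ x)
    refine ⟨φ s, ?_, ?_⟩
    · simp only [Finset.coe_image, Set.mem_image]
      exact ⟨s, hsF, rfl⟩
    · have hs : s ∈ dynJoin f (↑α : Set (Set unitInterval)) n := hFU hsF
      simp only [hφdef, dif_pos hs]
      rw [hs.choose_spec.2] at hxs
      apply Set.mem_iInter.mpr
      intro i
      have := Set.mem_iInter.mp hxs i
      exact (henl1 _ (hs.choose_spec.1 i)).2 this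
  · exact dynJoin_cover_spec f α hcov n

lemma ball_ordConnected (c : unitInterval) (ε : ℝ) :
    (Metric.ball c ε).OrdConnected := by
  constructor
  intro y hy z hz w hw
  have hd : ∀ a b : unitInterval, dist a b = |(a : ℝ) - b| := by
    intro a b; rw [Subtype.dist_eq, Real.dist_eq]
  simp only [Metric.mem_ball, hd, abs_sub_lt_iff] at hy hz ⊢
  have h1 : (y : ℝ) ≤ w := Subtype.coe_le_coe.mpr hw.1
  have h2 : (w : ℝ) ≤ z := Subtype.coe_le_coe.mpr hw.2
  constructor <;> linarith [hy.1, hy.2, hz.1, hz.2]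

lemma exists_minimal_subcover :
    ∀ (n : ℕ) (β : Finset (Set unitInterval)), β.card ≤ n →
      ⋃₀ (β : Set (Set unitInterval)) = Set.univ →
      ∃ γ, γ ⊆ β ∧ ⋃₀ (γ : Set (Set unitInterval)) = Set.univ ∧
        ∀ δ ⊆ γ, ⋃₀ (δ : Set (Set unitInterval)) = Set.univ → δ = γ := by
  intro n
  induction n with
  | zero =>
    intro β hcard hcov
    refine ⟨β, le_refl _, hcov, fun δ hδ _ => ?_⟩
    have hβ : β = ∅ := Finset.card_eq_zero.mp (Nat.le_zero.mp hcard)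
    subst hβ
    exact Finset.subset_empty.mp hδ
  | succ n ih =>
    intro β hcard hcov
    by_cases hmin : ∀ δ ⊆ β, ⋃₀ (δ : Set (Set unitInterval)) = Set.univ → δ = β
    · exact ⟨β, le_refl _, hcov, hmin⟩
    · push_neg at hmin
      obtain ⟨δ, hδβ, hδcov, hδne⟩ := hmin
      have hlt : δ.card < β.card := Finset.card_lt_card (lt_of_le_of_ne hδβ hδne)
      obtain ⟨γ, hγδ, hγcov, hγmin⟩ := ih δ (by omega) hδcov
      exact ⟨γ, hγδ.trans hδβ, hγcov, hγmin⟩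

lemma exists_minimal_refinement (U : Set (Set unitInterval)) (hU : IsOpenCover U) :
    ∃ α : Finset (Set unitInterval), IsMinimalIntervalCover α ∧
      ∀ a ∈ (α : Set (Set unitInterval)), ∃ u ∈ U, a ⊆ u := by
  have h : ∀ x : unitInterval, ∃ ε : ℝ, 0 < ε ∧ ∃ u ∈ U, Metric.ball x ε ⊆ u := by
    intro x
    have hx : x ∈ ⋃₀ U := hU.2 ▸ Set.mem_univ x
    obtain ⟨u, huU, hxu⟩ := hx
    obtain ⟨ε, hε, hb⟩ := Metric.isOpen_iff.mp (hU.1 u huU) x hxu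
    exact ⟨ε, hε, u, huU, hb⟩
  choose r hr hsub using h
  obtain ⟨t, ht⟩ := isCompact_univ.elim_finite_subcover
    (fun x : unitInterval => Metric.ball x (r x)) (fun x => Metric.isOpen_ball)
    (fun x _ => Set.mem_iUnion.mpr ⟨x, Metric.mem_ball_self (hr x)⟩)
  set β := t.image fun x => Metric.ball x (r x) with hβ
  have hβcov : ⋃₀ (β : Set (Set unitInterval)) = Set.univ := by
    apply Set.eq_univ_of_univ_subset
    intro x hx
    obtain ⟨c, hc, hxc⟩ := Set.mem_iUnion₂.mp (ht (Set.mem_univ x))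
    exact ⟨Metric.ball c (r c), by
      simp only [hβ, Finset.coe_image, Set.mem_image, Finset.mem_coe]
      exact ⟨c, hc, rfl⟩, hxc⟩
  obtain ⟨γ, hγβ, hγcov, hγmin⟩ := exists_minimal_subcover β.card β le_rfl hβcov
  have hball : ∀ a ∈ γ, ∃ c, a = Metric.ball c (r c) := by
    intro a ha
    have := hγβ ha
    rw [hβ, Finset.mem_image] at this
    obtain ⟨c, hc, rfl⟩ := this
    exact ⟨c, rfl⟩
  refine ⟨γ, ⟨?_, hγcov, hγmin⟩, ?_⟩
  · intro a ha
    obtain ⟨c, rfl⟩ := hball a ha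
    exact ⟨Metric.isOpen_ball, ball_ordConnected _ _⟩
  · intro a ha
    obtain ⟨c, rfl⟩ := hball a (Finset.mem_coe.mp ha)
    obtain ⟨u, hu1, hu2⟩ := hsub c
    exact ⟨u, hu1, hu2⟩

lemma entOf_eq (f : unitInterval → unitInterval) (hs : Function.Surjective f)
    (α : Finset (Set unitInterval))
    (hcov : ⋃₀ (α : Set (Set unitInterval)) = Set.univ) :
    entOf (Gr f) α = Filter.limsup (fun n : ℕ =>
      ENNReal.ofReal (Real.log (coverNum Set.univ (dynJoin f ↑α n)) / n))
      Filter.atTop := by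
  rw [entOf, if_pos (mahavierInf_nonempty f hs)]
  congr 1
  funext m
  rw [coverNum_grid_eq f α hcov m]

end AkmAux


/-- If `f : [0,1] → [0,1]` is a continuous surjection and `G` is the graph
of `f⁻¹`, then the Adler–Konheim–McAndrew entropy `h(f)` equals `ent(G)`. -/
theorem akmEntropy_eq_ent_graph_inv
    (f : unitInterval → unitInterval) (hf : Continuous f)
    (hsurj : Function.Surjective f) :
    akmEntropy f = ent {p : unitInterval × unitInterval | ∃ t, p = (f t, t)} := by
  have hG : {p : unitInterval × unitInterval | ∃ t, p = (f t, t)} = AkmAux.Gr f := rfl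
  rw [hG]
  apply le_antisymm
  · apply iSup_le
    rintro ⟨U, hU⟩
    obtain ⟨α, hαmin, href⟩ := AkmAux.exists_minimal_refinement U hU
    have h1 : Filter.limsup (fun n : ℕ =>
        ENNReal.ofReal (Real.log (coverNum Set.univ (dynJoin f U n)) / n))
        Filter.atTop ≤ Filter.limsup (fun n : ℕ =>
        ENNReal.ofReal (Real.log (coverNum Set.univ
          (dynJoin f (↑α : Set (Set unitInterval)) n)) / n)) Filter.atTop :=
      AkmAux.limsup_log_div_mono _ _
        (fun n => AkmAux.coverNum_dynJoin_le_of_refine f U α hαmin.2.1 href n)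
    refine h1.trans ?_
    rw [← AkmAux.entOf_eq f hsurj α hαmin.2.1]
    exact le_iSup (fun β : {β : Finset (Set unitInterval) //
      IsMinimalIntervalCover β} => entOf (AkmAux.Gr f) β.1) ⟨α, hαmin⟩
  · apply iSup_le
    rintro ⟨α, hα⟩
    rw [AkmAux.entOf_eq f hsurj α hα.2.1]
    have hUopen : IsOpenCover ((α : Set (Set unitInterval))) :=
      ⟨fun u hu => (hα.1 u hu).1, hα.2.1⟩
    exact le_iSup (fun U : {U : Set (Set unitInterval) // IsOpenCover U} =>
      Filter.limsup (fun n : ℕ =>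
        ENNReal.ofReal (Real.log (coverNum Set.univ (dynJoin f U.1 n)) / n))
        Filter.atTop) ⟨↑α, hUopen⟩
end
end

section
/- Suppose G is a closed subset of [0,1]², 𝐆 = ⋆_{i=1}^∞ G is nonempty, σ(𝐆) = 𝐆, and k ≥ 1 is an integer. Then ent(⋆_{i=1}^k G) = k · ent(G), where ⋆_{i=1}^k G is regarded as a closed subset of [0,1]^{k+1}. -/
open Set Filter Topology unitInterval
open scoped Classical

noncomputable section

namespace MahavierAux

/-- Truncation: every `m`-fold Mahavier product is nonempty if the infinite one is. -/
lemma mahavierFin_nonempty {G : Set (unitInterval × unitInterval)}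
    (hne : (MahavierInf G).Nonempty) (m : ℕ) : (MahavierFin G m).Nonempty := by
  obtain ⟨x, hx⟩ := hne
  exact ⟨fun i => x i.1, fun i => hx i.1⟩

/-- The set over which `coverNum` takes an infimum is nonempty for grid covers. -/
lemma coverSet_nonempty {α : Finset (Set unitInterval)}
    (hα : ⋃₀ (α : Set (Set unitInterval)) = Set.univ) (n : ℕ)
    (K : Set (Fin n → unitInterval)) :
    ∃ F : Finset (Set (Fin n → unitInterval)),
      ↑F ⊆ gridCover α n ∧ K ⊆ ⋃₀ ↑F := by
  classical
  refine ⟨Finset.image (fun f : Fin n → {u // u ∈ α} => {x | ∀ i, x i ∈ (f i).1})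
    Finset.univ, ?_, ?_⟩
  · intro s hs
    simp only [Finset.coe_image, Set.mem_image] at hs
    obtain ⟨f, -, rfl⟩ := hs
    exact ⟨fun i => (f i).1, fun i => (f i).2, rfl⟩
  · intro x _
    have h : ∀ i : Fin n, ∃ u : {u // u ∈ α}, x i ∈ u.1 := by
      intro i
      have hx : x i ∈ ⋃₀ (α : Set (Set unitInterval)) := by rw [hα]; trivial
      obtain ⟨u, hu, hxu⟩ := hx
      exact ⟨⟨u, hu⟩, hxu⟩
    choose f hf using h
    exact ⟨_, Finset.mem_coe.mpr (Finset.mem_image_of_mem _ (Finset.mem_univ f)), hf⟩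

lemma coverNum_le {X : Type*} {K : Set X} {U : Set (Set X)} {F : Finset (Set X)}
    (hF : ↑F ⊆ U) (hc : K ⊆ ⋃₀ ↑F) : coverNum K U ≤ F.card :=
  Nat.sInf_le ⟨F, hF, rfl, hc⟩

lemma exists_min_cover {X : Type*} {K : Set X} {U : Set (Set X)}
    (h : ∃ F : Finset (Set X), ↑F ⊆ U ∧ K ⊆ ⋃₀ ↑F) :
    ∃ F : Finset (Set X), ↑F ⊆ U ∧ F.card = coverNum K U ∧ K ⊆ ⋃₀ ↑F := by
  obtain ⟨F, hF, hc⟩ := h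
  have hmem : coverNum K U ∈
      {n | ∃ F : Finset (Set X), ↑F ⊆ U ∧ F.card = n ∧ K ⊆ ⋃₀ ↑F} :=
    Nat.sInf_mem ⟨F.card, F, hF, rfl, hc⟩
  obtain ⟨F', hF', hcard, hc'⟩ := hmem
  exact ⟨F', hF', hcard, hc'⟩

lemma one_le_coverNum {X : Type*} {K : Set X} {U : Set (Set X)} (hK : K.Nonempty)
    (h : ∃ F : Finset (Set X), ↑F ⊆ U ∧ K ⊆ ⋃₀ ↑F) : 1 ≤ coverNum K U := by
  obtain ⟨F, _, hcard, hc⟩ := exists_min_cover h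
  obtain ⟨x, hx⟩ := hK
  obtain ⟨s, hs, -⟩ := hc hx
  rw [← hcard]
  exact Finset.card_pos.mpr ⟨s, Finset.mem_coe.mp hs⟩

/-- First `m+1` coordinates. -/
def frontMap (m n : ℕ) (x : Fin (m + n + 2) → unitInterval) :
    Fin (m + 1) → unitInterval := fun i => x ⟨i.1, by omega⟩

/-- Last `n+1` coordinates. -/
def backMap (m n : ℕ) (x : Fin (m + n + 2) → unitInterval) :
    Fin (n + 1) → unitInterval := fun i => x ⟨m + 1 + i.1, by omega⟩

lemma comb_mem_grid {α : Finset (Set unitInterval)} {m n : ℕ}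
    {s : Set (Fin (m + 1) → unitInterval)} {t : Set (Fin (n + 1) → unitInterval)}
    (hs : s ∈ gridCover α (m + 1)) (ht : t ∈ gridCover α (n + 1)) :
    {x : Fin (m + n + 2) → unitInterval | frontMap m n x ∈ s ∧ backMap m n x ∈ t}
      ∈ gridCover α (m + n + 2) := by
  obtain ⟨f, hf, rfl⟩ := hs
  obtain ⟨g, hg, rfl⟩ := ht
  refine ⟨fun i => if h : i.1 ≤ m then f ⟨i.1, by omega⟩ else g ⟨i.1 - (m + 1), by omega⟩,
    ?_, ?_⟩
  · intro i; dsimp only; split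
    · exact hf _
    · exact hg _
  · ext x
    simp only [Set.mem_setOf_eq, frontMap, backMap]
    constructor
    · rintro ⟨h1, h2⟩ i
      split
      case isTrue h =>
        exact h1 ⟨i.1, by omega⟩
      case isFalse h =>
        have h3 := h2 ⟨i.1 - (m + 1), by omega⟩
        have e : (⟨m + 1 + (i.1 - (m + 1)), by omega⟩ : Fin (m + n + 2)) = i :=
          Fin.ext (by simp; omega)
        rwa [e] at h3
    · intro h
      constructor
      · intro i
        have h3 := h ⟨i.1, by omega⟩
        dsimp only at h3
        rw [dif_pos (by omega : i.1 ≤ m)] at h3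
        exact h3
      · intro i
        have h3 := h ⟨m + 1 + i.1, by omega⟩
        dsimp only at h3
        rw [dif_neg (by omega : ¬ m + 1 + i.1 ≤ m)] at h3
        have e : (⟨m + 1 + i.1 - (m + 1), by omega⟩ : Fin (n + 1)) = i :=
          Fin.ext (by simp)
        rwa [e] at h3

lemma front_mem {G : Set (unitInterval × unitInterval)} {m n : ℕ}
    {x : Fin (m + n + 2) → unitInterval} (hx : x ∈ MahavierFin G (m + n + 1)) :
    frontMap m n x ∈ MahavierFin G m := by
  intro i
  exact hx ⟨i.1, by omega⟩

lemma back_mem {G : Set (unitInterval × unitInterval)} {m n : ℕ}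
    {x : Fin (m + n + 2) → unitInterval} (hx : x ∈ MahavierFin G (m + n + 1)) :
    backMap m n x ∈ MahavierFin G n := by
  intro i
  exact hx ⟨m + 1 + i.1, by omega⟩

/-- Submultiplicativity of grid cover numbers for Mahavier products. -/
lemma coverNum_submul {G : Set (unitInterval × unitInterval)}
    {α : Finset (Set unitInterval)}
    (hα : ⋃₀ (α : Set (Set unitInterval)) = Set.univ) (m n : ℕ) :
    coverNum (MahavierFin G (m + n + 1)) (gridCover α (m + n + 2)) ≤
      coverNum (MahavierFin G m) (gridCover α (m + 1)) *
      coverNum (MahavierFin G n) (gridCover α (n + 1)) := by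
  classical
  obtain ⟨F1, hF1, hc1, hcov1⟩ := exists_min_cover (coverSet_nonempty hα (m + 1)
    (MahavierFin G m))
  obtain ⟨F2, hF2, hc2, hcov2⟩ := exists_min_cover (coverSet_nonempty hα (n + 1)
    (MahavierFin G n))
  set F : Finset (Set (Fin (m + n + 2) → unitInterval)) :=
    Finset.image (fun p : Set (Fin (m + 1) → unitInterval) × Set (Fin (n + 1) → unitInterval)
      => {x | frontMap m n x ∈ p.1 ∧ backMap m n x ∈ p.2}) (F1 ×ˢ F2) with hF
  have hsub : ↑F ⊆ gridCover α (m + n + 2) := by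
    intro s hsF
    simp only [hF, Finset.coe_image, Set.mem_image, Finset.mem_coe, Finset.mem_product]
      at hsF
    obtain ⟨⟨s1, s2⟩, ⟨h1, h2⟩, rfl⟩ := hsF
    exact comb_mem_grid (hF1 h1) (hF2 h2)
  have hcov : MahavierFin G (m + n + 1) ⊆ ⋃₀ ↑F := by
    intro x hx
    obtain ⟨s1, hs1, hxs1⟩ := hcov1 (front_mem hx)
    obtain ⟨s2, hs2, hxs2⟩ := hcov2 (back_mem hx)
    refine ⟨{y | frontMap m n y ∈ s1 ∧ backMap m n y ∈ s2}, ?_, hxs1, hxs2⟩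
    simp only [hF, Finset.coe_image, Set.mem_image, Finset.mem_coe, Finset.mem_product]
    exact ⟨(s1, s2), ⟨Finset.mem_coe.mp hs1, Finset.mem_coe.mp hs2⟩, rfl⟩
  calc coverNum (MahavierFin G (m + n + 1)) (gridCover α (m + n + 2)) ≤ F.card :=
        coverNum_le hsub hcov
    _ ≤ (F1 ×ˢ F2).card := Finset.card_image_le
    _ = _ := by rw [Finset.card_product, hc1, hc2]

lemma pair_mem_congr {G : Set (unitInterval × unitInterval)} {N : ℕ}
    (x : Fin N → unitInterval) {a b a' b' : ℕ} {ha : a < N} {hb : b < N}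
    {ha' : a' < N} {hb' : b' < N} (h1 : a = a') (h2 : b = b')
    (h : (x ⟨a, ha⟩, x ⟨b, hb⟩) ∈ G) : (x ⟨a', ha'⟩, x ⟨b', hb'⟩) ∈ G := by
  subst h1; subst h2; exact h

/-- The `m`-fold product of the `k`-fold product is the `m*k`-fold product. -/
lemma mahavierFinN_eq (G : Set (unitInterval × unitInterval)) (k : ℕ) (hk : 1 ≤ k)
    (m : ℕ) : MahavierFinN k (MahavierFin G k) m = MahavierFin G (m * k) := by
  ext x
  simp only [MahavierFinN, MahavierFin, Set.mem_setOf_eq]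
  constructor
  · intro h p
    have hk0 : 0 < k := hk
    have hj : p.1 / k < m := Nat.div_lt_of_lt_mul (p.2.trans_le (Nat.mul_comm m k).le)
    have hi : p.1 % k < k := Nat.mod_lt _ hk0
    have key : p.1 / k * k + p.1 % k = p.1 := Nat.div_add_mod' _ _
    have h3 := h ⟨p.1 / k, hj⟩ ⟨p.1 % k, hi⟩
    refine pair_mem_congr x ?_ ?_ h3
    · simpa using key
    · simp only [Fin.succ_mk, Fin.val_succ]
      rw [← Nat.add_assoc, key]
  · intro h j i
    have hb : j.1 * k + i.1 < m * k := by
      have h1 : (j.1 + 1) * k ≤ m * k := Nat.mul_le_mul_right _ j.2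
      have h2 : (j.1 + 1) * k = j.1 * k + k := by ring
      omega
    refine pair_mem_congr x ?_ ?_ (h ⟨j.1 * k + i.1, hb⟩)
    · simp
    · simp only [Fin.succ_mk, Fin.val_succ]
      exact Nat.add_assoc _ _ _

lemma mahavierInfN_nonempty {G : Set (unitInterval × unitInterval)}
    (hne : (MahavierInf G).Nonempty) (k : ℕ) :
    (MahavierInfN k (MahavierFin G k)).Nonempty := by
  obtain ⟨x, hx⟩ := hne
  exact ⟨x, fun j i => hx (j * k + i.1)⟩

/-- Fekete: the normalized log cover numbers converge. -/
lemma tendsto_log_coverNum {G : Set (unitInterval × unitInterval)}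
    {α : Finset (Set unitInterval)}
    (hα : ⋃₀ (α : Set (Set unitInterval)) = Set.univ)
    (hne : (MahavierInf G).Nonempty) :
    ∃ L : ℝ, 0 ≤ L ∧ Tendsto (fun m : ℕ =>
      Real.log (coverNum (MahavierFin G m) (gridCover α (m + 1))) / m)
      atTop (𝓝 L) := by
  set c : ℕ → ℕ := fun m => coverNum (MahavierFin G m) (gridCover α (m + 1)) with hc
  have hc1 : ∀ m, 1 ≤ c m := fun m =>
    one_le_coverNum (mahavierFin_nonempty hne m) (coverSet_nonempty hα (m + 1) _)
  set u : ℕ → ℝ := fun n => if n = 0 then 0 else Real.log (c (n - 1)) with hu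
  have hu_nonneg : ∀ n, 0 ≤ u n := by
    intro n
    rcases eq_or_ne n 0 with h | h
    · simp [hu, h]
    · simp only [hu, if_neg h]
      exact Real.log_nonneg (by exact_mod_cast hc1 _)
  have hsub : Subadditive u := by
    intro a b
    rcases Nat.eq_zero_or_pos a with ha | ha
    · simp [ha, hu]
    rcases Nat.eq_zero_or_pos b with hb | hb
    · simp [hb, hu]
    obtain ⟨a', rfl⟩ : ∃ a', a = a' + 1 := ⟨a - 1, by omega⟩
    obtain ⟨b', rfl⟩ : ∃ b', b = b' + 1 := ⟨b - 1, by omega⟩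
    have harg : a' + 1 + (b' + 1) = a' + b' + 1 + 1 := by omega
    rw [harg]
    have huval : u (a' + b' + 1 + 1) = Real.log (c (a' + b' + 1)) := by
      simp [hu]
    rw [huval]
    simp only [hu, if_neg (Nat.succ_ne_zero a'), if_neg (Nat.succ_ne_zero b'),
      Nat.add_sub_cancel]
    have hle : (c (a' + b' + 1) : ℝ) ≤ (c a' : ℝ) * (c b' : ℝ) := by
      rw [← Nat.cast_mul]
      exact_mod_cast coverNum_submul hα a' b'
    calc Real.log (c (a' + b' + 1)) ≤ Real.log ((c a' : ℝ) * (c b' : ℝ)) :=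
          Real.log_le_log (by exact_mod_cast hc1 _) hle
      _ = Real.log (c a') + Real.log (c b') :=
          Real.log_mul (by exact_mod_cast Nat.one_le_iff_ne_zero.mp (hc1 a'))
            (by exact_mod_cast Nat.one_le_iff_ne_zero.mp (hc1 b'))
  have hbdd : BddBelow (Set.range fun n => u n / n) := by
    refine ⟨0, ?_⟩
    rintro x ⟨n, rfl⟩
    exact div_nonneg (hu_nonneg n) (Nat.cast_nonneg n)
  have htend := hsub.tendsto_lim hbdd
  have hLnn : 0 ≤ hsub.lim :=
    le_of_tendsto_of_tendsto tendsto_const_nhds htend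
      (Filter.Eventually.of_forall fun n => div_nonneg (hu_nonneg n) (Nat.cast_nonneg n))
  refine ⟨hsub.lim, hLnn, ?_⟩
  have h1 : Tendsto (fun m : ℕ => u (m + 1) / (m + 1 : ℕ)) atTop (𝓝 hsub.lim) :=
    htend.comp (tendsto_add_atTop_nat 1)
  have h2 : Tendsto (fun m : ℕ => ((m : ℝ) + 1) / m) atTop (𝓝 1) := by
    have ha : Tendsto (fun m : ℕ => (1 : ℝ) / m) atTop (𝓝 0) :=
      tendsto_one_div_atTop_nhds_zero_nat
    have h3 : Tendsto (fun m : ℕ => 1 + (1 : ℝ) / m) atTop (𝓝 (1 + 0)) :=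
      tendsto_const_nhds.add ha
    rw [add_zero] at h3
    refine h3.congr' ?_
    filter_upwards [eventually_ne_atTop 0] with m hm
    have hm' : (m : ℝ) ≠ 0 := Nat.cast_ne_zero.mpr hm
    field_simp
  have h4 : Tendsto (fun m : ℕ => u (m + 1) / (m + 1 : ℕ) * (((m : ℝ) + 1) / m))
      atTop (𝓝 (hsub.lim * 1)) := h1.mul h2
  rw [mul_one] at h4
  refine h4.congr' ?_
  filter_upwards [eventually_ne_atTop 0] with m hm
  have hm' : (m : ℝ) ≠ 0 := Nat.cast_ne_zero.mpr hm
  have : u (m + 1) = Real.log (c m) := by simp [hu]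
  rw [this]
  push_cast
  field_simp
  rfl

end MahavierAux

/-- For closed `G ⊆ [0,1]²` with `𝐆 = ⋆_{i=1}^∞ G ≠ ∅`, `σ(𝐆) = 𝐆`, and
`k ≥ 1`, the entropy of the `k`-fold Mahavier product `⋆_{i=1}^k G` (as a closed subset
of `[0,1]^{k+1}`) equals `k · ent(G)`. -/
theorem entN_mahavierFin_eq_mul
    (G : Set (unitInterval × unitInterval)) (hGcl : IsClosed G)
    (hne : (MahavierInf G).Nonempty)
    (hσ : shiftMap '' MahavierInf G = MahavierInf G)
    (k : ℕ) (hk : 1 ≤ k) :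
    entN k (MahavierFin G k) = (k : ENNReal) * ent G := by
  classical
  have key : ∀ α : {α : Finset (Set unitInterval) // IsMinimalIntervalCover α},
      entOfN k (MahavierFin G k) α.1 = (k : ENNReal) * entOf G α.1 := by
    rintro ⟨α, hα⟩
    show entOfN k (MahavierFin G k) α = (k : ENNReal) * entOf G α
    have hcov : ⋃₀ (α : Set (Set unitInterval)) = Set.univ := hα.2.1
    obtain ⟨L, hL0, hL⟩ := MahavierAux.tendsto_log_coverNum hcov hne
    have hEntOf : entOf G α = ENNReal.ofReal L := by
      rw [entOf, if_pos hne]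
      exact Filter.Tendsto.limsup_eq ((ENNReal.continuous_ofReal.tendsto L).comp hL)
    have hNne : (MahavierInfN k (MahavierFin G k)).Nonempty :=
      MahavierAux.mahavierInfN_nonempty hne k
    have hkmul : Tendsto (fun m : ℕ =>
        Real.log (coverNum (MahavierFinN k (MahavierFin G k) m)
          (gridCover α (m * k + 1))) / m) atTop (𝓝 ((k : ℝ) * L)) := by
      have hsubseq : Tendsto (fun m : ℕ => m * k) atTop atTop :=
        Filter.tendsto_atTop_atTop.2 fun b =>
          ⟨b, fun a ha => le_trans ha (Nat.le_mul_of_pos_right a hk)⟩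
      have h1 : Tendsto (fun m : ℕ =>
          Real.log (coverNum (MahavierFin G (m * k)) (gridCover α (m * k + 1))) /
            ((m * k : ℕ) : ℝ)) atTop (𝓝 L) := hL.comp hsubseq
      have h2 := h1.const_mul (k : ℝ)
      refine h2.congr' ?_
      filter_upwards [eventually_ge_atTop 1] with m hm
      rw [MahavierAux.mahavierFinN_eq G k hk m]
      have hm' : (m : ℝ) ≠ 0 := Nat.cast_ne_zero.mpr (by omega)
      have hk' : (k : ℝ) ≠ 0 := Nat.cast_ne_zero.mpr (by omega)
      push_cast
      field_simp
    have hlim2 := Filter.Tendsto.limsup_eq (ENNReal.tendsto_ofReal hkmul)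
    rw [entOfN, if_pos hNne, hlim2, hEntOf, ← ENNReal.ofReal_natCast k,
      ← ENNReal.ofReal_mul (by positivity)]
  rw [entN, ent, ENNReal.mul_iSup]
  exact iSup_congr key
end
end

section
/- Let G = {(x,y) ∈ [0,1]² : y ≤ x}. Then ent(G) = 0. -/
open Set Filter Topology unitInterval
open scoped Classical

noncomputable section

namespace TriangleAux

noncomputable def supR (u : Set unitInterval) : ℝ := sSup (Subtype.val '' u)
noncomputable def key (u : Set unitInterval) : ℝ ×ₗ Bool :=
  toLex (supR u, if ∃ z ∈ u, (z : ℝ) = supR u then true else false)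
lemma bddAbove_im (u : Set unitInterval) : BddAbove (Subtype.val '' u) :=
  ⟨1, by rintro r ⟨z, hz, rfl⟩; exact z.2.2⟩
lemma le_supR {u : Set unitInterval} {z : unitInterval} (hz : z ∈ u) : (z : ℝ) ≤ supR u :=
  le_csSup (bddAbove_im u) ⟨z, hz, rfl⟩
lemma supR_le {u : Set unitInterval} (hu : u.Nonempty) {c : ℝ}
    (h : ∀ z ∈ u, (z : ℝ) ≤ c) : supR u ≤ c :=
  csSup_le (hu.image _) (by rintro r ⟨z, hz, rfl⟩; exact h z hz)
lemma key_eq_iff {u v : Set unitInterval} (h : key u = key v) :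
    supR u = supR v ∧
      ((∃ z ∈ u, (z : ℝ) = supR u) ↔ (∃ z ∈ v, (z : ℝ) = supR v)) := by
  rw [key, key, toLex_inj, Prod.ext_iff] at h
  refine ⟨h.1, ?_⟩
  by_cases h1 : ∃ z ∈ u, (z : ℝ) = supR u <;> by_cases h2 : ∃ z ∈ v, (z : ℝ) = supR v <;>
    simp [h1, h2] at h ⊢

variable {α : Finset (Set unitInterval)}

lemma not_ssubset (hα : IsMinimalIntervalCover α) {u v : Set unitInterval}
    (hu : u ∈ α) (hv : v ∈ α) (huv : u ⊆ v) (hne : u ≠ v) : False := by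
  have hcov : ⋃₀ ((α.erase u : Finset (Set unitInterval)) : Set (Set unitInterval))
      = Set.univ := by
    apply Set.eq_univ_of_univ_subset
    rw [← hα.2.1]
    rintro x ⟨w, hw, hxw⟩
    rcases eq_or_ne w u with rfl | hwu
    · exact ⟨v, by simp [Finset.mem_coe, Finset.mem_erase, Ne.symm hne, hv], huv hxw⟩
    · exact ⟨w, by simp [Finset.mem_coe, Finset.mem_erase, hwu, Finset.mem_coe.mp hw], hxw⟩
  have h := hα.2.2 (α.erase u) (Finset.erase_subset _ _) hcov
  rw [← h] at hu
  exact (Finset.notMem_erase u α) hu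

lemma mem_nonempty (hα : IsMinimalIntervalCover α) {u : Set unitInterval}
    (hu : u ∈ α) : u.Nonempty := by
  by_contra h
  rw [Set.not_nonempty_iff_eq_empty] at h
  subst h
  have hcov : ⋃₀ ((α.erase ∅ : Finset (Set unitInterval)) : Set (Set unitInterval))
      = Set.univ := by
    apply Set.eq_univ_of_univ_subset
    rw [← hα.2.1]
    rintro x ⟨w, hw, hxw⟩
    have hwu : w ≠ ∅ := by rintro rfl; exact hxw
    exact ⟨w, by simp [Finset.mem_coe, Finset.mem_erase, hwu, Finset.mem_coe.mp hw], hxw⟩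
  have h := hα.2.2 _ (Finset.erase_subset _ _) hcov
  rw [← h] at hu
  exact (Finset.notMem_erase ∅ α) hu

lemma key_cases {u v : Set unitInterval} (hou : u.OrdConnected) (_hov : v.OrdConnected)
    {z w : unitInterval} (hz : z ∈ u) (hw : w ∈ v) (_hzv : z ∉ v) (hwu : w ∉ u)
    (hzw : z < w) (hk : key u = key v) : False := by
  have hub : supR u ≤ (w : ℝ) := by
    apply supR_le ⟨z, hz⟩
    intro t ht
    rcases le_or_gt t w with h | h
    · exact_mod_cast h
    · exact absurd (hou.out hz ht ⟨hzw.le, h.le⟩) hwu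
  have hlb : (w : ℝ) ≤ supR v := le_supR hw
  obtain ⟨h1, h2⟩ := key_eq_iff hk
  have hsup : supR u = (w : ℝ) := le_antisymm hub (h1 ▸ hlb)
  have hattv : ∃ z ∈ v, (z : ℝ) = supR v := ⟨w, hw, by rw [← h1, hsup]⟩
  obtain ⟨t, ht, htw⟩ := h2.mpr hattv
  rw [hsup] at htw
  exact hwu ((Subtype.ext htw : t = w) ▸ ht)

lemma key_injOn (hα : IsMinimalIntervalCover α) {u v : Set unitInterval}
    (hu : u ∈ α) (hv : v ∈ α) (hk : key u = key v) : u = v := by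
  by_contra hne
  have h1 : ¬ u ⊆ v := fun h => not_ssubset hα hu hv h hne
  have h2 : ¬ v ⊆ u := fun h => not_ssubset hα hv hu h (Ne.symm hne)
  obtain ⟨z, hz, hzv⟩ := Set.not_subset.mp h1
  obtain ⟨w, hw, hwu⟩ := Set.not_subset.mp h2
  rcases lt_trichotomy z w with h | h | h
  · exact key_cases (hα.1 u hu).2 (hα.1 v hv).2 hz hw hzv hwu h hk
  · exact hzv (h ▸ hw)
  · exact key_cases (hα.1 v hv).2 (hα.1 u hu).2 hw hz hwu hzv h hk.symm

lemma exists_sel (hα : IsMinimalIntervalCover α) (x : unitInterval) :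
    ∃ u, u ∈ α ∧ x ∈ u ∧ ∀ v ∈ α, x ∈ v → key v ≤ key u := by
  have hx : x ∈ ⋃₀ (α : Set (Set unitInterval)) := hα.2.1 ▸ Set.mem_univ x
  obtain ⟨u0, hu0, hxu0⟩ := hx
  obtain ⟨u, hu, hmax⟩ := Finset.exists_max_image (α.filter fun v => x ∈ v) key
    ⟨u0, Finset.mem_filter.mpr ⟨Finset.mem_coe.mp hu0, hxu0⟩⟩
  refine ⟨u, (Finset.mem_filter.mp hu).1, (Finset.mem_filter.mp hu).2, fun v hv hxv =>
    hmax v (Finset.mem_filter.mpr ⟨hv, hxv⟩)⟩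

lemma sel_mono (hα : IsMinimalIntervalCover α) {s : unitInterval → Set unitInterval}
    (hs1 : ∀ x, s x ∈ α) (hs2 : ∀ x, x ∈ s x)
    (hs3 : ∀ x, ∀ v ∈ α, x ∈ v → key v ≤ key (s x))
    {x y : unitInterval} (hxy : x ≤ y) : key (s x) ≤ key (s y) := by
  by_contra hle
  have hlt : key (s y) < key (s x) := lt_of_not_ge hle
  have hyu : y ∉ s x := fun hy => absurd (hs3 y (s x) (hs1 x) hy) (not_le.mpr hlt)
  have hub : supR (s x) ≤ (y : ℝ) := by
    apply supR_le ⟨x, hs2 x⟩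
    intro t ht
    rcases le_or_gt t y with h | h
    · exact_mod_cast h
    · exact absurd ((hα.1 _ (hs1 x)).2.out (hs2 x) ht ⟨hxy, h.le⟩) hyu
  have hlb : (y : ℝ) ≤ supR (s y) := le_supR (hs2 y)
  rw [key, key, Prod.Lex.lt_iff] at hlt
  rcases hlt with h | ⟨h1, h2⟩
  · change supR (s y) < supR (s x) at h
    linarith
  · change supR (s y) = supR (s x) at h1
    have hflag := (Bool.lt_iff.mp h2).2
    have hP : ∃ z ∈ s x, (z : ℝ) = supR (s x) := by
      by_contra hP; simp [hP] at hflag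
    obtain ⟨t, ht, htsup⟩ := hP
    have hsx : supR (s x) = (y : ℝ) := by rw [← h1] at hub ⊢; linarith
    exact hyu ((Subtype.ext (htsup.trans hsx) : t = y) ▸ ht)


variable {α : Finset (Set unitInterval)}

/-- rank of `u` in `α` w.r.t. `key` -/
noncomputable def rk (key : Set unitInterval → ℝ ×ₗ Bool) (α : Finset (Set unitInterval))
    (u : Set unitInterval) : ℕ :=
  (α.filter fun v => key v ≤ key u).card

lemma rk_mono {u v : Set unitInterval} (h : key u ≤ key v) : rk key α u ≤ rk key α v :=
  Finset.card_le_card (Finset.monotone_filter_right α (fun w _ hw => hw.trans h))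

lemma rk_lt {u v : Set unitInterval} (hv : v ∈ α) (h : key u < key v) :
    rk key α u < rk key α v := by
  apply Finset.card_lt_card
  rw [Finset.ssubset_iff_of_subset (Finset.monotone_filter_right α (fun w _ hw => hw.trans h.le))]
  exact ⟨v, Finset.mem_filter.mpr ⟨hv, le_refl _⟩,
    fun hc => absurd (Finset.mem_filter.mp hc).2 (not_le.mpr h)⟩

lemma rk_le_card (u : Set unitInterval) : rk key α u ≤ α.card := Finset.card_filter_le _ _

lemma rk_inj (hinj : ∀ u ∈ α, ∀ v ∈ α, key u = key v → u = v)
    {u v : Set unitInterval} (hu : u ∈ α) (hv : v ∈ α)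
    (h : rk key α u = rk key α v) : u = v := by
  rcases lt_trichotomy (key u) (key v) with hk | hk | hk
  · exact absurd h (Nat.ne_of_lt (rk_lt hv hk))
  · exact hinj u hu v hv hk
  · exact absurd h.symm (Nat.ne_of_lt (rk_lt hu hk))

lemma rk_inj' (hα : IsMinimalIntervalCover α) {u v : Set unitInterval}
    (hu : u ∈ α) (hv : v ∈ α) (h : rk key α u = rk key α v) : u = v :=
  rk_inj (fun u hu v hv hk => key_injOn hα hu hv hk) hu hv h

/-- initial-segment counting for antitone `g` -/
lemma count_iff {n : ℕ} {g : Fin (n + 1) → ℕ}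
    (hg : ∀ i j : Fin (n + 1), i ≤ j → g j ≤ g i) (j : ℕ) (i : Fin (n + 1)) :
    j ≤ g i ↔ (i : ℕ) < (Finset.univ.filter fun i' => j ≤ g i').card := by
  constructor
  · intro h
    have hsub : Finset.Iic i ⊆ Finset.univ.filter fun i' => j ≤ g i' := by
      intro i' hi'
      simp only [Finset.mem_filter, Finset.mem_univ, true_and]
      exact le_trans h (hg i' i (Finset.mem_Iic.mp hi'))
    have := Finset.card_le_card hsub
    rw [Fin.card_Iic] at this
    omega
  · intro h
    by_contra hj
    push_neg at hj
    have hsub : (Finset.univ.filter fun i' => j ≤ g i') ⊆ Finset.Iio i := by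
      intro i' hi'
      rw [Finset.mem_Iio]
      by_contra hge
      push_neg at hge
      have h1 := hg i i' hge
      have h2 := (Finset.mem_filter.mp hi').2
      omega
    have := Finset.card_le_card hsub
    rw [Fin.card_Iio] at this
    omega


lemma mah_antitone {m : ℕ} {x : Fin (m + 1) → unitInterval}
    (hx : x ∈ MahavierFin {p : unitInterval × unitInterval | p.2 ≤ p.1} m) :
    ∀ i j : Fin (m + 1), i ≤ j → x j ≤ x i := by
  have step : ∀ d : ℕ, ∀ i j : Fin (m + 1), (j : ℕ) = (i : ℕ) + d → x j ≤ x i := by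
    intro d
    induction d with
    | zero =>
      intro i j h
      have : j = i := Fin.ext (by omega)
      exact this ▸ le_refl _
    | succ d ih =>
      intro i j h
      have hlt : (j : ℕ) - 1 < m := by omega
      set p : Fin m := ⟨(j : ℕ) - 1, hlt⟩ with hp
      have h1 : x p.succ ≤ x p.castSucc := hx p
      have hps : p.succ = j := Fin.ext (by simp [Fin.val_succ, hp]; omega)
      have h2 : x p.castSucc ≤ x i := ih i p.castSucc (by simp [Fin.coe_castSucc, hp]; omega)
    -- combine
      calc x j = x p.succ := by rw [hps]
        _ ≤ x p.castSucc := h1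
        _ ≤ x i := h2
  intro i j hij
  have hij' : (i : ℕ) ≤ (j : ℕ) := hij
  exact step ((j : ℕ) - (i : ℕ)) i j (by omega)


theorem coverNum_le (hα : IsMinimalIntervalCover α) (m : ℕ) :
    coverNum (MahavierFin {p : unitInterval × unitInterval | p.2 ≤ p.1} m)
      (gridCover α (m + 1)) ≤ (m + 2) ^ (α.card + 1) := by
  classical
  choose s hs1 hs2 hs3 using exists_sel (α := α) hα
  set k := α.card with hk
  set T : Finset (Fin (m + 1) → {u // u ∈ α}) :=
    Finset.univ.filter
      (fun f => ∀ i j : Fin (m + 1), i ≤ j → rk key α (f j).1 ≤ rk key α (f i).1) with hT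
  set cell : (Fin (m + 1) → {u // u ∈ α}) → Set (Fin (m + 1) → unitInterval) :=
    fun f => {x | ∀ i, x i ∈ (f i).1} with hcell
  set F : Finset (Set (Fin (m + 1) → unitInterval)) := T.image cell with hF
  have hcov : MahavierFin {p : unitInterval × unitInterval | p.2 ≤ p.1} m ⊆ ⋃₀ ↑F := by
    intro x hx
    have hanti := mah_antitone hx
    refine ⟨cell (fun i => ⟨s (x i), hs1 (x i)⟩), ?_, fun i => hs2 (x i)⟩
    rw [Finset.mem_coe, hF, Finset.mem_image]
    refine ⟨_, ?_, rfl⟩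
    rw [hT, Finset.mem_filter]
    refine ⟨Finset.mem_univ _, fun i j hij => ?_⟩
    exact rk_mono (sel_mono hα hs1 hs2 hs3 (hanti i j hij))
  have hsub : ↑F ⊆ gridCover α (m + 1) := by
    intro S hS
    rw [Finset.mem_coe, hF, Finset.mem_image] at hS
    obtain ⟨f, _, rfl⟩ := hS
    exact ⟨fun i => (f i).1, fun i => (f i).2, rfl⟩
  have h1 : coverNum (MahavierFin {p : unitInterval × unitInterval | p.2 ≤ p.1} m)
      (gridCover α (m + 1)) ≤ F.card := Nat.sInf_le ⟨F, hsub, rfl, hcov⟩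
  have h2 : F.card ≤ T.card := Finset.card_image_le
  -- count T via injection
  set Φ : (Fin (m + 1) → {u // u ∈ α}) → (Fin (k + 1) → Fin (m + 2)) :=
    fun f j => ⟨(Finset.univ.filter fun i => (j : ℕ) ≤ rk key α (f i).1).card, by
      have := Finset.card_filter_le (Finset.univ : Finset (Fin (m + 1)))
        (fun i => (j : ℕ) ≤ rk key α (f i).1)
      simp only [Finset.card_univ, Fintype.card_fin] at this
      omega⟩ with hΦ
  have hinj : Set.InjOn Φ ↑T := by
    intro f hf g hg hfg
    rw [Finset.mem_coe, hT, Finset.mem_filter] at hf hg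
    have hfa := hf.2
    have hga := hg.2
    funext i
    have hcnt : ∀ j : ℕ, j ≤ k →
        (Finset.univ.filter fun i' => j ≤ rk key α (f i').1).card =
        (Finset.univ.filter fun i' => j ≤ rk key α (g i').1).card := by
      intro j hj
      have := congrFun hfg ⟨j, by omega⟩
      rw [hΦ] at this
      simpa using congrArg Fin.val this
    have hle1 : rk key α (g i).1 ≤ rk key α (f i).1 := by
      have hj : rk key α (g i).1 ≤ k := rk_le_card _
      have h1 := (count_iff hga (rk key α (g i).1) i).mp (le_refl _)
      rw [← hcnt _ hj] at h1
      exact (count_iff hfa (rk key α (g i).1) i).mpr h1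
    have hle2 : rk key α (f i).1 ≤ rk key α (g i).1 := by
      have hj : rk key α (f i).1 ≤ k := rk_le_card _
      have h1 := (count_iff hfa (rk key α (f i).1) i).mp (le_refl _)
      rw [hcnt _ hj] at h1
      exact (count_iff hga (rk key α (f i).1) i).mpr h1
    exact Subtype.ext (rk_inj' hα (f i).2 (g i).2 (le_antisymm hle2 hle1))
  have h3 : T.card ≤ (m + 2) ^ (k + 1) := by
    have := Finset.card_le_card_of_injOn Φ (fun a _ => Finset.mem_univ (Φ a)) hinj
    simpa [Finset.card_univ, Fintype.card_fun] using this
  omega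


lemma tendsto_bound (K : ℕ) :
    Tendsto (fun m : ℕ => (K : ℝ) * Real.log ((m : ℝ) + 2) / m) atTop (𝓝 0) := by
  have l1 : Tendsto (fun x : ℝ => Real.log x / x) atTop (𝓝 0) :=
    Real.isLittleO_log_id_atTop.tendsto_div_nhds_zero
  have l2 : Tendsto (fun m : ℕ => (m : ℝ) + 2) atTop atTop :=
    tendsto_atTop_add_const_right _ 2 tendsto_natCast_atTop_atTop
  have l3 : Tendsto (fun m : ℕ => Real.log ((m : ℝ) + 2) / ((m : ℝ) + 2)) atTop (𝓝 0) :=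
    l1.comp l2
  have l4 : Tendsto (fun m : ℕ => ((m : ℝ) + 2) / m) atTop (𝓝 1) := by
    have h2 : Tendsto (fun m : ℕ => 1 + 2 / (m : ℝ)) atTop (𝓝 1) := by
      have := (tendsto_const_div_atTop_nhds_zero_nat (2 : ℝ)).const_add 1
      simpa using this
    apply h2.congr'
    filter_upwards [eventually_ge_atTop 1] with m hm
    have hm' : (m : ℝ) ≠ 0 := by
      have : (1 : ℝ) ≤ (m : ℝ) := by exact_mod_cast hm
      linarith
    field_simp
  have l5 : Tendsto (fun m : ℕ =>
      Real.log ((m : ℝ) + 2) / ((m : ℝ) + 2) * (((m : ℝ) + 2) / m)) atTop (𝓝 0) := by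
    have := l3.mul l4
    simpa using this
  have l6 : Tendsto (fun m : ℕ => Real.log ((m : ℝ) + 2) / m) atTop (𝓝 0) := by
    apply l5.congr
    intro m
    have hb : (m : ℝ) + 2 ≠ 0 := by positivity
    rw [div_mul_div_comm, mul_comm (Real.log ((m : ℝ) + 2)), mul_div_mul_left _ _ hb]
  have := l6.const_mul (K : ℝ)
  simp only [mul_zero] at this
  apply this.congr
  intro m
  rw [mul_div_assoc]

lemma limsup_zero_of_poly {c : ℕ → ℕ} {K : ℕ} (hc : ∀ m, c m ≤ (m + 2) ^ K) :
    Filter.limsup (fun m : ℕ => ENNReal.ofReal (Real.log (c m) / m)) atTop = 0 := by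
  have h0 : ∀ m : ℕ, (0 : ℝ) ≤ Real.log (c m) / m := fun m =>
    div_nonneg (Real.log_natCast_nonneg _) (Nat.cast_nonneg m)
  have hub : ∀ m : ℕ, Real.log (c m) / m ≤ (K : ℝ) * Real.log ((m : ℝ) + 2) / m := by
    intro m
    have hm0 : (0 : ℝ) ≤ (m : ℝ) := Nat.cast_nonneg m
    have hlog2 : (0 : ℝ) ≤ Real.log ((m : ℝ) + 2) := Real.log_nonneg (by linarith)
    have hnum : Real.log (c m) ≤ (K : ℝ) * Real.log ((m : ℝ) + 2) := by
      rcases Nat.eq_zero_or_pos (c m) with h | h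
      · rw [h]
        simp only [Nat.cast_zero, Real.log_zero]
        positivity
      · have hle : (c m : ℝ) ≤ ((m : ℝ) + 2) ^ K := by
          calc (c m : ℝ) ≤ ((m + 2 : ℕ) : ℝ) ^ K := by exact_mod_cast hc m
            _ = ((m : ℝ) + 2) ^ K := by push_cast; ring
        calc Real.log (c m) ≤ Real.log (((m : ℝ) + 2) ^ K) :=
              Real.log_le_log (by exact_mod_cast h) hle
          _ = (K : ℝ) * Real.log ((m : ℝ) + 2) := by
              rw [Real.log_pow]
    rcases Nat.eq_zero_or_pos m with rfl | hm
    · simp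
    · have hm' : (0 : ℝ) < (m : ℝ) := by exact_mod_cast hm
      gcongr
  have hreal : Tendsto (fun m : ℕ => Real.log (c m) / m) atTop (𝓝 0) :=
    squeeze_zero h0 hub (tendsto_bound K)
  have henn : Tendsto (fun m : ℕ => ENNReal.ofReal (Real.log (c m) / m)) atTop (𝓝 0) := by
    have := ENNReal.tendsto_ofReal hreal
    simpa using this
  exact henn.limsup_eq


end TriangleAux

/-- the Triangle Example: the set `G = {(x,y) ∈ [0,1]² : y ≤ x}` has
topological entropy `0`. -/
theorem ent_triangle_eq_zero :
    ent {p : unitInterval × unitInterval | p.2 ≤ p.1} = 0 := by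
  rw [ent, ENNReal.iSup_eq_zero]
  rintro ⟨α, hα⟩
  rw [entOf]
  split_ifs with h
  · exact TriangleAux.limsup_zero_of_poly (fun m => TriangleAux.coverNum_le hα m)
  · rfl
end
end
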